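/- arXiv:1505.01901 — 6 statements merged into one kernel-verified Lean document; each statement's English description precedes it below -/
import Mathlib

section
/- For every set A ⊆ ℕ, the partial computability bound α(A) is at most the coarse computability bound γ(A). In particular, if A is generically computable then γ(A) = 1. -/
open Filter Topology
open scoped symmDiff Classical

/-- ρ_n(A): the density of A below n. -/
noncomputable def partialDensity (A : Set ℕ) (n : ℕ) : ℝ :=
  ((Finset.range n).filter (fun k => k ∈ A)).card / n

/-- Lower density ρ̲(A). -/
noncomputable def lowerDensity (A : Set ℕ) : ℝ := liminf (partialDensity A) atTop

/-- Upper density ρ̄(A). -/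
noncomputable def upperDensity (A : Set ℕ) : ℝ := limsup (partialDensity A) atTop

/-- A has density r. -/
def HasDensity (A : Set ℕ) (r : ℝ) : Prop := Tendsto (partialDensity A) atTop (𝓝 r)

/-- A set of naturals is computable. -/
def IsComputableSet (A : Set ℕ) : Prop := ComputablePred (· ∈ A)

/-- A is coarsely computable at density r. -/
def CoarselyComputableAt (A : Set ℕ) (r : ℝ) : Prop :=
  ∃ C : Set ℕ, IsComputableSet C ∧ r ≤ lowerDensity {n | n ∈ A ↔ n ∈ C}

/-- γ(A), the coarse computability bound. -/
noncomputable def gammaBound (A : Set ℕ) : ℝ := sSup {r | CoarselyComputableAt A r}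

/-- A is partially computable at density r. -/
def PartiallyComputableAt (A : Set ℕ) (r : ℝ) : Prop :=
  ∃ φ : ℕ →. Bool, Partrec φ ∧ (∀ n b, b ∈ φ n → (b = true ↔ n ∈ A)) ∧
    r ≤ lowerDensity φ.Dom

/-- α(A), the partial computability bound. -/
noncomputable def alphaBound (A : Set ℕ) : ℝ := sSup {r | PartiallyComputableAt A r}

/-- A is generically computable. -/
def GenericallyComputable (A : Set ℕ) : Prop := PartiallyComputableAt A 1

/-- A is coarsely computable. -/
def CoarselyComputable (A : Set ℕ) : Prop :=
  ∃ C : Set ℕ, IsComputableSet C ∧ HasDensity (A ∆ C) 0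

/-! ### Density lemmas -/

section Density

lemma partialDensity_nonneg (A : Set ℕ) (n : ℕ) : 0 ≤ partialDensity A n := by
  unfold partialDensity; positivity

lemma partialDensity_le_one (A : Set ℕ) (n : ℕ) : partialDensity A n ≤ 1 := by
  unfold partialDensity
  rcases Nat.eq_zero_or_pos n with h | h
  · simp [h]
  · rw [div_le_one (by exact_mod_cast h)]
    exact_mod_cast (Finset.card_filter_le _ _).trans_eq (Finset.card_range n)

lemma pd_bdd (A : Set ℕ) : IsBoundedUnder (· ≥ ·) atTop (partialDensity A) :=
  isBoundedUnder_of ⟨0, fun n => partialDensity_nonneg A n⟩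

lemma pd_cobdd (A : Set ℕ) : IsCoboundedUnder (· ≥ ·) atTop (partialDensity A) :=
  (isBoundedUnder_of ⟨1, fun n => partialDensity_le_one A n⟩ :
    IsBoundedUnder (· ≤ ·) atTop (partialDensity A)).isCoboundedUnder_ge

lemma lowerDensity_nonneg (A : Set ℕ) : 0 ≤ lowerDensity A :=
  le_liminf_of_le (pd_cobdd A) (Eventually.of_forall (partialDensity_nonneg A))

lemma lowerDensity_le_one (A : Set ℕ) : lowerDensity A ≤ 1 := by
  have h := liminf_le_liminf (f := atTop)
    (Eventually.of_forall (fun n => partialDensity_le_one A n)) (pd_bdd A)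
    ((isBoundedUnder_of ⟨1, fun _ => le_refl (1:ℝ)⟩ :
      IsBoundedUnder (· ≤ ·) atTop (fun _ : ℕ => (1:ℝ))).isCoboundedUnder_ge)
  have h' : liminf (partialDensity A) atTop ≤ 1 := by simpa [liminf_const] using h
  exact h'

lemma partialDensity_mono {A B : Set ℕ} (h : A ⊆ B) (n : ℕ) :
    partialDensity A n ≤ partialDensity B n := by
  unfold partialDensity
  rcases Nat.eq_zero_or_pos n with hn | hn
  · simp [hn]
  · have hcard : (((Finset.range n).filter (fun k => k ∈ A)).card : ℝ) ≤
        (((Finset.range n).filter (fun k => k ∈ B)).card : ℝ) := by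
      exact_mod_cast Finset.card_le_card (by
        intro x hx
        simp only [Finset.mem_filter] at hx ⊢
        exact ⟨hx.1, h hx.2⟩)
    have hnR : (0:ℝ) < n := by exact_mod_cast hn
    exact div_le_div_of_nonneg_right hcard hnR.le

lemma partialDensity_eq_card (A : Set ℕ) [inst : DecidablePred (· ∈ A)] (n : ℕ) :
    partialDensity A n = (((Finset.range n).filter (fun k => k ∈ A)).card : ℝ) / n := by
  unfold partialDensity
  rw [Finset.filter_congr_decidable]

lemma lowerDensity_mono {A B : Set ℕ} (h : A ⊆ B) : lowerDensity A ≤ lowerDensity B :=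
  liminf_le_liminf (Eventually.of_forall (partialDensity_mono h)) (pd_bdd A) (pd_cobdd B)

end Density

/-! ### The computable approximation construction -/

section Construction

open Nat.Partrec (Code)
open Nat.Partrec.Code

lemma isSome_of_mem {o : Option ℕ} {y : ℕ} (h : y ∈ o) : o.isSome = true := by
  cases o <;> simp_all

lemma exists_of_isSome {o : Option ℕ} (h : o.isSome = true) : ∃ y, y ∈ o := by
  cases o <;> simp_all

/-- number of points below `m` on which code `c` halts within `s` steps -/
def dcard (c : Code) (s m : ℕ) : ℕ :=
  ((List.range m).filterMap fun k => cond ((evaln s c k).isSome) (some k) none).length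

lemma length_filterMap_cond (p : ℕ → Bool) (l : List ℕ) :
    (l.filterMap fun k => cond (p k) (some k) none).length = (l.filter p).length := by
  induction l with
  | nil => rfl
  | cons a t ih => cases hpa : p a <;> simp [List.filterMap_cons, List.filter_cons, hpa, ih]

lemma card_filter_range (p : ℕ → Bool) (m : ℕ) :
    ((List.range m).filter p).length = ((Finset.range m).filter (fun k => p k = true)).card := by
  induction m with
  | zero => rfl
  | succ n ih =>
    rw [List.range_succ, List.filter_append, List.length_append, Finset.range_add_one,
      Finset.filter_insert]
    by_cases h : p n = true
    · rw [if_pos h, Finset.card_insert_of_notMem (by simp)]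
      simp [List.filter_cons, h, ih]
    · rw [if_neg h]
      have h' : p n = false := by revert h; cases p n <;> simp
      simp [List.filter_cons, h', ih]

lemma dcard_eq (c : Code) (s m : ℕ) :
    dcard c s m = ((Finset.range m).filter (fun k => (evaln s c k).isSome = true)).card := by
  rw [dcard, length_filterMap_cond, card_filter_range]

/-- Boolean version of: for all `m' ∈ [N, m]`, the density of the stage-`s` domain
at `m'` is at least `a / b`. -/
def goodB (c : Code) (a b N : ℕ) (m s : ℕ) : Bool :=
  decide ((((List.range (m+1)).filterMap fun m' =>
    cond (decide (N ≤ m') && !decide (a * m' ≤ b * dcard c s m')) (some m') none).length) = 0)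

lemma goodB_iff {c : Code} {a b N m s : ℕ} :
    goodB c a b N m s = true ↔ ∀ m', N ≤ m' → m' ≤ m → a * m' ≤ b * dcard c s m' := by
  rw [goodB, decide_eq_true_iff, List.length_eq_zero_iff, List.filterMap_eq_nil_iff]
  constructor
  · intro H m' h1 h2
    have hm' : m' ∈ List.range (m+1) := List.mem_range.2 (by omega)
    have := H m' hm'
    by_contra hcon
    simp [h1, hcon] at this
  · intro H m' hm'
    have h2 : m' ≤ m := by simp only [List.mem_range] at hm'; omega
    by_cases h1 : N ≤ m'
    · simp [h1, H m' h1 h2]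
    · simp [h1]

lemma dcard_prim (c : Code) : Primrec₂ (dcard c) := by
  have h1 : Primrec fun p : (ℕ × ℕ) × ℕ => (evaln p.1.1 c p.2).isSome :=
    Primrec.option_isSome.comp
      (primrec_evaln.comp (((Primrec.fst.comp Primrec.fst).pair (Primrec.const c)).pair Primrec.snd))
  have h2 : Primrec₂ fun (p : ℕ × ℕ) (k : ℕ) =>
      cond ((evaln p.1 c k).isSome) (some k) none :=
    Primrec.cond h1 (Primrec.option_some.comp Primrec.snd) (Primrec.const none)
  exact Primrec.list_length.comp
    (Primrec.listFilterMap (Primrec.list_range.comp Primrec.snd) h2)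

lemma goodB_prim (c : Code) (a b N : ℕ) : Primrec₂ (goodB c a b N) := by
  have d1 : Primrec fun p : (ℕ × ℕ) × ℕ => decide (N ≤ p.2) :=
    (Primrec.nat_le.comp (Primrec.const N) Primrec.snd).decide
  have d2 : Primrec fun p : (ℕ × ℕ) × ℕ => decide (a * p.2 ≤ b * dcard c p.1.2 p.2) :=
    (Primrec.nat_le.comp (Primrec.nat_mul.comp (Primrec.const a) Primrec.snd)
      (Primrec.nat_mul.comp (Primrec.const b)
        ((dcard_prim c).comp (Primrec.snd.comp Primrec.fst) Primrec.snd))).decide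
  have hcond : Primrec fun p : (ℕ × ℕ) × ℕ =>
      (decide (N ≤ p.2) && !decide (a * p.2 ≤ b * dcard c p.1.2 p.2)) :=
    (Primrec.dom_bool₂ (· && ·)).comp d1 (Primrec.not.comp d2)
  have h2 : Primrec₂ fun (p : ℕ × ℕ) (m' : ℕ) =>
      cond (decide (N ≤ m') && !decide (a * m' ≤ b * dcard c p.2 m')) (some m') none :=
    Primrec.cond hcond (Primrec.option_some.comp Primrec.snd) (Primrec.const none)
  have hlen : Primrec fun p : ℕ × ℕ => (((List.range (p.1+1)).filterMap fun m' =>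
      cond (decide (N ≤ m') && !decide (a * m' ≤ b * dcard c p.2 m')) (some m') none).length) :=
    Primrec.list_length.comp
      (Primrec.listFilterMap (Primrec.list_range.comp (Primrec.succ.comp Primrec.fst)) h2)
  exact (PrimrecRel.comp Primrec.eq hlen (Primrec.const 0)).decide.to₂

/-- the least stage which is good for all scales in `[N, m]`. -/
noncomputable def stage (c : Code) (a b N : ℕ)
    (hex : ∀ m, ∃ s, goodB c a b N m s = true) (m : ℕ) : ℕ :=
  Nat.find (hex m)

lemma stage_spec (c : Code) (a b N : ℕ) (hex : ∀ m, ∃ s, goodB c a b N m s = true) (m : ℕ) :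
    goodB c a b N m (stage c a b N hex m) = true := Nat.find_spec (hex m)

lemma stage_mono (c : Code) (a b N : ℕ) (hex : ∀ m, ∃ s, goodB c a b N m s = true)
    {m₁ m₂ : ℕ} (h : m₁ ≤ m₂) : stage c a b N hex m₁ ≤ stage c a b N hex m₂ :=
  Nat.find_mono fun s hs => by
    rw [goodB_iff] at hs ⊢
    exact fun m' h1 h2 => hs m' h1 (h2.trans h)

lemma stage_computable (c : Code) (a b N : ℕ) (hex : ∀ m, ∃ s, goodB c a b N m s = true) :
    Computable (stage c a b N hex) := by
  have hrf := Partrec.rfind ((goodB_prim c a b N).to_comp.partrec₂)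
  apply hrf.of_eq_tot
  intro m
  rw [Nat.mem_rfind]
  constructor
  · simp only [PFun.coe_val, Part.mem_some_iff]
    exact (stage_spec c a b N hex m).symm
  · intro k hk
    have hmin := Nat.find_min (hex m) hk
    simp only [PFun.coe_val, Part.mem_some_iff]
    cases hgb : goodB c a b N m k with
    | false => rfl
    | true => exact absurd hgb hmin

end Construction

/-! ### The key lemma -/

section Key

open Nat.Partrec (Code)
open Nat.Partrec.Code

lemma key {A : Set ℕ} {r : ℝ} (h : PartiallyComputableAt A r) {ε : ℝ} (hε : 0 < ε) :
    CoarselyComputableAt A (r - ε) := by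
  obtain ⟨φ, hφ, hcorr, hdom⟩ := h
  -- trivial case
  rcases le_or_gt r ε with hre | hre
  · refine ⟨∅, ?_, ?_⟩
    · exact ComputablePred.computable_iff.2 ⟨fun _ => false, Computable.const _, by
        funext n; simp [Set.mem_empty_iff_false]⟩
    · have : r - ε ≤ 0 := by linarith
      exact this.trans (lowerDensity_nonneg _)
  -- main case
  have hε2 : (0:ℝ) < ε / 2 := by linarith
  obtain ⟨q, hq1, hq2⟩ := exists_rat_btwn (show r - ε/2 < r by linarith)
  have hqpos : (0:ℝ) < (q:ℝ) := by linarith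
  set a : ℕ := q.num.toNat with ha
  set b : ℕ := q.den with hb
  have hbpos : 0 < b := q.pos
  have hab : ((a:ℝ)/(b:ℝ)) = (q:ℝ) := by
    have hqnum : (0:ℤ) < q.num := Rat.num_pos.2 (by exact_mod_cast hqpos)
    have ha' : (q.num.toNat : ℤ) = q.num := Int.toNat_of_nonneg hqnum.le
    have h2 : ((q.num.toNat : ℕ) : ℝ) = ((q.num : ℤ) : ℝ) := by rw [← Int.cast_natCast, ha']
    rw [ha, hb, Rat.cast_def, h2]
  set K : ℕ := ⌈(2:ℝ)/ε⌉₊ with hK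
  have hKpos : 0 < K := by
    rw [hK]; exact Nat.ceil_pos.2 (by positivity)
  have hKR : (0:ℝ) < K := by exact_mod_cast hKpos
  have hKbig : (1:ℝ)/K ≤ ε/2 := by
    have h1 : (2:ℝ)/ε ≤ (K:ℝ) := Nat.le_ceil _
    have h2 : (2:ℝ) ≤ K * ε := by
      rw [div_le_iff₀ hε] at h1; linarith
    rw [div_le_div_iff₀ hKR (by norm_num : (0:ℝ) < 2)]
    nlinarith
  -- code for φ
  have hnp : Nat.Partrec fun n => (φ n).map Encodable.encode := by
    simpa [Partrec] using hφ
  obtain ⟨c, hc⟩ := exists_code.1 hnp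
  have hDom : ∀ k, k ∈ φ.Dom ↔ ∃ s, (evaln s c k).isSome = true := by
    intro k
    constructor
    · rintro hk
      obtain ⟨y, hy⟩ := Part.dom_iff_mem.1 hk
      have hmem : Encodable.encode y ∈ c.eval k := by
        rw [hc]; exact Part.mem_map _ hy
      obtain ⟨s, hs⟩ := evaln_complete.1 hmem
      exact ⟨s, isSome_of_mem hs⟩
    · rintro ⟨s, hs⟩
      obtain ⟨y, hy⟩ := exists_of_isSome hs
      have hyev : y ∈ c.eval k := evaln_sound hy
      rw [hc] at hyev
      obtain ⟨z, hz, _⟩ := (Part.mem_map_iff _).1 hyev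
      exact Part.dom_iff_mem.2 ⟨z, hz⟩
  -- eventual density
  have hql : (q:ℝ) < liminf (partialDensity φ.Dom) atTop := lt_of_lt_of_le hq2 hdom
  have hev : ∀ᶠ n in atTop, (q:ℝ) < partialDensity φ.Dom n :=
    eventually_lt_of_lt_liminf hql (pd_bdd _)
  obtain ⟨N₀, hN₀⟩ := eventually_atTop.1 hev
  set N : ℕ := max N₀ 1 with hN
  have hN1 : 1 ≤ N := le_max_right _ _
  -- existence of good stages
  have hex : ∀ m, ∃ s, goodB c a b N m s = true := by
    intro m
    have hstage : ∀ m', ∃ s, ∀ k < m', k ∈ φ.Dom → (evaln s c k).isSome = true := by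
      intro m'
      induction m' with
      | zero => exact ⟨0, by omega⟩
      | succ n ih =>
        obtain ⟨s₀, hs₀⟩ := ih
        by_cases hk : n ∈ φ.Dom
        · obtain ⟨s₁, hs₁⟩ := (hDom n).1 hk
          refine ⟨max s₀ s₁, fun k hkn hkd => ?_⟩
          rcases Nat.lt_succ_iff_lt_or_eq.1 hkn with h' | h'
          · obtain ⟨y, hy⟩ := exists_of_isSome (hs₀ k h' hkd)
            exact isSome_of_mem (evaln_mono (le_max_left _ _) hy)
          · subst h'
            obtain ⟨y, hy⟩ := exists_of_isSome hs₁
            exact isSome_of_mem (evaln_mono (le_max_right _ _) hy)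
        · refine ⟨s₀, fun k hkn hkd => ?_⟩
          rcases Nat.lt_succ_iff_lt_or_eq.1 hkn with h' | h'
          · exact hs₀ k h' hkd
          · subst h'; exact absurd hkd hk
    obtain ⟨s, hs⟩ := hstage (m+1)
    refine ⟨s, goodB_iff.2 fun m' h1 h2 => ?_⟩
    have hm'1 : 1 ≤ m' := le_trans hN1 h1
    have hm'N₀ : N₀ ≤ m' := le_trans (le_max_left _ _) h1
    have hd := hN₀ m' hm'N₀
    rw [partialDensity_eq_card] at hd
    set D := ((Finset.range m').filter (fun k => k ∈ φ.Dom)).card with hD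
    have h3 : (q:ℝ) * m' < D := by
      have hm'pos : (0:ℝ) < m' := by exact_mod_cast hm'1
      rw [lt_div_iff₀ hm'pos] at hd
      exact hd
    have h4 : D ≤ dcard c s m' := by
      rw [hD, dcard_eq]
      apply Finset.card_le_card
      intro k hk
      simp only [Finset.mem_filter, Finset.mem_range] at hk ⊢
      exact ⟨hk.1, hs k (by omega) hk.2⟩
    have h5 : (a:ℝ) * m' ≤ (b:ℝ) * D := by
      have hbR : (0:ℝ) < b := by exact_mod_cast hbpos
      have haq : (a:ℝ) = q * b := by
        rw [← hab]; field_simp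
      rw [haq]
      nlinarith
    have h6 : a * m' ≤ b * D := by exact_mod_cast h5
    calc a * m' ≤ b * D := h6
    _ ≤ b * dcard c s m' := Nat.mul_le_mul_left _ h4
  -- the computable set C and the witnessing subset S
  set u : ℕ → ℕ := stage c a b N hex with hu
  set f : ℕ → Bool := fun k => decide ((evaln (u (K * (k+1))) c k) = some (Encodable.encode true))
    with hf
  have hfcomp : Computable f := by
    have h1 : Computable fun k => u (K * (k+1)) :=
      (stage_computable c a b N hex).comp
        ((Primrec.nat_mul.comp (Primrec.const K) Primrec.succ).to_comp)
    have h2 : Computable fun k => evaln (u (K * (k+1))) c k :=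
      primrec_evaln.to_comp.comp ((h1.pair (Computable.const c)).pair Computable.id)
    have h3 := ((Primrec.eq (α := Option ℕ)).decide.to_comp :
        Computable₂ fun (x y : Option ℕ) => decide (x = y)).comp h2
      (Computable.const (some (Encodable.encode true)))
    exact h3.of_eq fun k => decide_eq_decide.2 Iff.rfl
  set C : Set ℕ := {n | f n = true} with hC
  have hCcomp : IsComputableSet C := ComputablePred.computable_iff.2 ⟨f, hfcomp, rfl⟩
  set S : Set ℕ := {k | (evaln (u (K * (k+1))) c k).isSome = true} with hS
  have hSsub : S ⊆ {n | n ∈ A ↔ n ∈ C} := by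
    intro k hk
    obtain ⟨y, hy⟩ := exists_of_isSome hk
    have hyev : y ∈ c.eval k := evaln_sound hy
    rw [hc] at hyev
    obtain ⟨bl, hbl, hble⟩ := (Part.mem_map_iff _).1 hyev
    have hcor := hcorr k bl hbl
    rw [Option.mem_def] at hy
    have hmem : k ∈ C ↔ y = Encodable.encode true := by
      simp only [hC, Set.mem_setOf_eq, hf, hy, decide_eq_true_eq, Option.some_inj]
    have henc : y = Encodable.encode true ↔ bl = true := by
      rw [← hble]
      exact ⟨fun h' => Encodable.encode_injective h', fun h' => by rw [h']⟩
    simp only [Set.mem_setOf_eq]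
    rw [hmem, henc, hcor]
  -- density estimate for S
  have hdens : ∀ n, N ≤ n → (q:ℝ) - 1/K ≤ partialDensity S n := by
    intro n hn
    have hn1 : 1 ≤ n := le_trans hN1 hn
    have hnR : (0:ℝ) < n := by exact_mod_cast hn1
    set T : Finset ℕ := (Finset.range n).filter (fun k => (evaln (u n) c k).isSome = true)
      with hT
    have hTS : ∀ k ∈ T, n / K ≤ k → k ∈ S := by
      intro k hkT hkK
      have hkrange : (evaln (u n) c k).isSome = true := by
        simp only [hT, Finset.mem_filter] at hkT
        exact hkT.2
      have hnK : n ≤ K * (k + 1) := by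
        have h' : n / K < k + 1 := Nat.lt_succ_of_le hkK
        have h'' := (Nat.div_lt_iff_lt_mul hKpos).1 h'
        rw [Nat.mul_comm K (k+1)]
        exact h''.le
      have hum : u n ≤ u (K * (k+1)) := stage_mono c a b N hex hnK
      obtain ⟨y, hy⟩ := exists_of_isSome hkrange
      exact isSome_of_mem (evaln_mono hum hy)
    set SF : Finset ℕ := (Finset.range n).filter (fun k => k ∈ S) with hSF
    have hsubset : T ⊆ Finset.range (n / K) ∪ SF := by
      intro k hk
      rcases lt_or_ge k (n / K) with h' | h'
      · exact Finset.mem_union_left _ (Finset.mem_range.2 h')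
      · refine Finset.mem_union_right _ ?_
        simp only [hSF, Finset.mem_filter]
        exact ⟨(Finset.filter_subset _ _) hk, hTS k hk h'⟩
    have hcount : T.card ≤ n / K + SF.card := by
      calc T.card ≤ (Finset.range (n / K) ∪ SF).card := Finset.card_le_card hsubset
      _ ≤ (Finset.range (n / K)).card + SF.card := Finset.card_union_le _ _
      _ = n / K + SF.card := by rw [Finset.card_range]
    have hgood := (goodB_iff.1 (stage_spec c a b N hex n)) n hn (le_refl n)
    have hdT : dcard c (u n) n = T.card := by rw [dcard_eq]
    rw [hdT] at hgood
    have hTR : (a:ℝ) * n ≤ (b:ℝ) * T.card := by exact_mod_cast hgood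
    have hbR : (0:ℝ) < b := by exact_mod_cast hbpos
    have hcR : (T.card : ℝ) ≤ ((n/K : ℕ) : ℝ) + SF.card := by exact_mod_cast hcount
    have hndiv : ((n/K : ℕ) : ℝ) ≤ (n:ℝ)/(K:ℝ) := Nat.cast_div_le
    have hSFcard : (q:ℝ) * n - n/K ≤ SF.card := by
      have h1 : (q:ℝ) * n ≤ T.card := by
        rw [← hab, div_mul_eq_mul_div, div_le_iff₀ hbR]
        linarith
      linarith
    have hpd : partialDensity S n = (SF.card : ℝ) / n := by
      rw [partialDensity_eq_card, hSF]
    rw [hpd, le_div_iff₀ hnR]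
    have hexp : ((q:ℝ) - 1/K) * n = (q:ℝ)*n - n/K := by ring
    rw [hexp]
    linarith
  -- conclusion
  refine ⟨C, hCcomp, ?_⟩
  have h1 : lowerDensity S ≤ lowerDensity {n | n ∈ A ↔ n ∈ C} := lowerDensity_mono hSsub
  have h2 : (q:ℝ) - 1/K ≤ lowerDensity S :=
    le_liminf_of_le (pd_cobdd S) (eventually_atTop.2 ⟨N, fun n hn => hdens n hn⟩)
  have h3 : r - ε ≤ (q:ℝ) - 1/K := by linarith
  linarith

end Key

theorem alphaBound_le_gammaBound (A : Set ℕ) :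
    alphaBound A ≤ gammaBound A ∧ (GenericallyComputable A → gammaBound A = 1) := by
  have hα0 : PartiallyComputableAt A 0 := by
    refine ⟨fun _ => Part.none, Partrec.none, fun n b hb => absurd hb (Part.notMem_none b), ?_⟩
    exact lowerDensity_nonneg _
  have hγ0 : CoarselyComputableAt A 0 := by
    refine ⟨∅, ?_, lowerDensity_nonneg _⟩
    exact ComputablePred.computable_iff.2 ⟨fun _ => false, Computable.const _, by
      funext n; simp [Set.mem_empty_iff_false]⟩
  have hαne : {r | PartiallyComputableAt A r}.Nonempty := ⟨0, hα0⟩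
  have hγne : {r | CoarselyComputableAt A r}.Nonempty := ⟨0, hγ0⟩
  have hγbdd : BddAbove {r | CoarselyComputableAt A r} := by
    refine ⟨1, fun r hr => ?_⟩
    obtain ⟨C, _, hC⟩ := hr
    exact hC.trans (lowerDensity_le_one _)
  have hαbdd : BddAbove {r | PartiallyComputableAt A r} := by
    refine ⟨1, fun r hr => ?_⟩
    obtain ⟨φ, _, _, hφ⟩ := hr
    exact hφ.trans (lowerDensity_le_one _)
  have hmain : alphaBound A ≤ gammaBound A := by
    apply csSup_le hαne
    intro x hx
    apply le_of_forall_pos_le_add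
    intro ε hε
    have hle : x - ε ≤ gammaBound A := le_csSup hγbdd (key hx hε)
    linarith
  refine ⟨hmain, fun hg => ?_⟩
  have h1 : gammaBound A ≤ 1 := by
    apply csSup_le hγne
    intro r hr
    obtain ⟨C, _, hC⟩ := hr
    exact hC.trans (lowerDensity_le_one _)
  have h2 : (1:ℝ) ≤ alphaBound A := le_csSup hαbdd hg
  exact le_antisymm h1 (h2.trans hmain)
end

section
/- Let I_n = [n!, (n+1)!) and for A ⊆ ℕ let 𝓘(A) = ⋃_{n ∈ A} I_n. If A is noncomputable and C is a computable set such that ρ̲({n : 𝓘(A)(n) = C(n)}) > 1/2, then A is computable (contradiction); consequently γ(𝓘(A)) ≤ 1/2 for noncomputable A. -/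
open Filter Topology
open scoped symmDiff Classical

/-- 𝓘(A) = ⋃_{n ∈ A} [n!, (n+1)!). -/
def calI (A : Set ℕ) : Set ℕ := ⋃ n ∈ A, Set.Ico (Nat.factorial n) (Nat.factorial (n + 1))

lemma primrec_factorial : Primrec Nat.factorial := by
  have h : Primrec (fun n => Nat.rec 1 (fun k ih => (k+1) * ih) n : ℕ → ℕ) :=
    Primrec.nat_rec₁ 1 (Primrec.nat_mul.comp (Primrec.succ.comp Primrec.fst) Primrec.snd)
  refine h.of_eq fun n => ?_
  induction n with
  | zero => rfl
  | succ k ih => simp [Nat.factorial, ih]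

def cntFun (cb : ℕ → Bool) : ℕ → ℕ := fun m => Nat.rec 0 (fun k ih => ih + cond (cb k) 1 0) m

lemma cntFun_computable {cb : ℕ → Bool} (h : Computable cb) : Computable (cntFun cb) := by
  have hh : Computable₂ (fun (_ : ℕ) (p : ℕ × ℕ) => p.2 + cond (cb p.1) 1 0) :=
    (Primrec.nat_add.to_comp).comp
      (Computable.snd.comp Computable.snd)
      (Computable.cond (h.comp (Computable.fst.comp Computable.snd))
        (Computable.const 1) (Computable.const 0))
  have := Computable.nat_rec (Computable.id (α := ℕ)) (Computable.const 0) hh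
  exact this.of_eq fun n => rfl

lemma cntFun_eq {cb : ℕ → Bool} {C : Set ℕ} (hcb : ∀ k, cb k = true ↔ k ∈ C) (m : ℕ) :
    cntFun cb m = ((Finset.range m).filter (fun k => k ∈ C)).card := by
  induction m with
  | zero => rfl
  | succ k ih =>
    have : cntFun cb (k+1) = cntFun cb k + cond (cb k) 1 0 := rfl
    rw [this, ih, Finset.range_add_one, Finset.filter_insert]
    by_cases hk : k ∈ C
    · rw [if_pos hk, Finset.card_insert_of_notMem (by simp)]
      simp [(hcb k).mpr hk]
    · rw [if_neg hk]
      have : cb k = false := by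
        cases h : cb k
        · rfl
        · exact absurd ((hcb k).mp h) hk
      simp [this]

lemma range_split (m M : ℕ) (h : m ≤ M) (P : ℕ → Prop) :
    ((Finset.range M).filter P).card
      = ((Finset.range m).filter P).card
        + ((Finset.Ico m M).filter P).card := by
  rw [Finset.range_eq_Ico,
    ← Finset.Ico_union_Ico_eq_Ico (Nat.zero_le m) h, Finset.filter_union,
    Finset.card_union_of_disjoint, Finset.range_eq_Ico]
  exact Finset.disjoint_filter_filter (Finset.Ico_disjoint_Ico_consecutive 0 m M)

lemma filter_card_eq {s : Finset ℕ} {p : ℕ → Prop} (h1 h2 : DecidablePred p) :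
    (@Finset.filter ℕ p h1 s).card = (@Finset.filter ℕ p h2 s).card := by
  have h : h1 = h2 := Subsingleton.elim _ _
  rw [h]

lemma calI_mem {A : Set ℕ} {n k : ℕ} (hn : n ∈ A) (h1 : n.factorial ≤ k)
    (h2 : k < (n+1).factorial) : k ∈ calI A :=
  Set.mem_biUnion hn ⟨h1, h2⟩

lemma calI_not_mem {A : Set ℕ} {n k : ℕ} (hn : n ∉ A) (h1 : n.factorial ≤ k)
    (h2 : k < (n+1).factorial) : k ∉ calI A := by
  intro hk
  obtain ⟨m, h3, hm, h4⟩ : ∃ m, m.factorial ≤ k ∧ m ∈ A ∧ k < (m+1).factorial := by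
    simpa [calI, Set.mem_Ico] using hk
  have hmn : m = n := by
    rcases lt_trichotomy m n with h | h | h
    · have := Nat.factorial_le (show m + 1 ≤ n from h); omega
    · exact h
    · have := Nat.factorial_le (show n + 1 ≤ m from h); omega
  exact hn (hmn ▸ hm)

lemma key_bound (A C : Set ℕ) (n : ℕ)
    (hw : ¬ (n ∈ A ↔ (n+1).factorial - n.factorial <
      2 * ((Finset.Ico n.factorial ((n+1).factorial)).filter (fun k => k ∈ C)).card)) :
    2 * ((Finset.range ((n+1).factorial)).filter
        (fun k => k ∈ {j | j ∈ calI A ↔ j ∈ C})).card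
      ≤ (n+1).factorial + n.factorial := by
  set m := n.factorial with hm
  set M := (n+1).factorial with hM
  have hmM : m ≤ M := Nat.factorial_le (by omega)
  set E : Set ℕ := {j | j ∈ calI A ↔ j ∈ C} with hE
  show 2 * ((Finset.range M).filter (fun k => k ∈ E)).card ≤ M + m
  have hIcard : (Finset.Ico m M).card = M - m := Nat.card_Ico m M
  have hfirst : ((Finset.range m).filter (fun k => k ∈ E)).card ≤ m := by
    calc ((Finset.range m).filter (fun k => k ∈ E)).card ≤ (Finset.range m).card :=
      Finset.card_filter_le _ _
    _ = m := Finset.card_range m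
  have hCle : ((Finset.Ico m M).filter (fun k => k ∈ C)).card ≤ M - m := by
    calc _ ≤ (Finset.Ico m M).card := Finset.card_filter_le _ _
    _ = M - m := hIcard
  have hsecond : 2 * ((Finset.Ico m M).filter (fun k => k ∈ E)).card ≤ M - m := by
    by_cases hnA : n ∈ A
    · have hmaj : ¬ (M - m < 2 * ((Finset.Ico m M).filter (fun k => k ∈ C)).card) :=
        fun h => hw (iff_of_true hnA h)
      have : (Finset.Ico m M).filter (fun k => k ∈ E)
          = (Finset.Ico m M).filter (fun k => k ∈ C) := by
        apply Finset.filter_congr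
        intro k hk
        simp only [Finset.mem_Ico] at hk
        have : k ∈ calI A := calI_mem hnA hk.1 hk.2
        simp [hE, this]
      rw [this]; omega
    · have hmaj : M - m < 2 * ((Finset.Ico m M).filter (fun k => k ∈ C)).card := by
        by_contra h
        exact hw (iff_of_false hnA h)
      have heq : (Finset.Ico m M).filter (fun k => k ∈ E)
          = (Finset.Ico m M).filter (fun k => ¬ (k ∈ C)) := by
        apply Finset.filter_congr
        intro k hk
        simp only [Finset.mem_Ico] at hk
        have : k ∉ calI A := calI_not_mem hnA hk.1 hk.2
        simp [hE, this]
      have hadd := Finset.card_filter_add_card_filter_not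
        (s := Finset.Ico m M) (p := fun k => k ∈ C)
      rw [heq]
      omega
  have hsplit : (Finset.filter (fun k => k ∈ E) (Finset.range M)).card
      = (Finset.filter (fun k => k ∈ E) (Finset.range m)).card
        + (Finset.filter (fun k => k ∈ E) (Finset.Ico m M)).card := by
    rw [Finset.range_eq_Ico, ← Finset.Ico_union_Ico_eq_Ico (Nat.zero_le m) hmM,
      Finset.filter_union, Finset.card_union_of_disjoint
        (Finset.disjoint_filter_filter (Finset.Ico_disjoint_Ico_consecutive 0 m M)),
        Finset.range_eq_Ico]
  rw [hsplit]
  omega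

lemma majority_correct (A C : Set ℕ)
    (hd : 1 / 2 < lowerDensity {n | n ∈ calI A ↔ n ∈ C}) :
    ∃ N, ∀ n, N ≤ n → (n ∈ A ↔ (n+1).factorial - n.factorial <
      2 * ((Finset.Ico n.factorial ((n+1).factorial)).filter (fun k => k ∈ C)).card) := by
  set E : Set ℕ := {n | n ∈ calI A ↔ n ∈ C} with hE
  set L : ℝ := lowerDensity E with hL
  set a : ℝ := (1/2 + L)/2 with ha
  have ha1 : 1/2 < a := by rw [ha]; linarith
  have ha2 : a < L := by rw [ha]; linarith
  have hbdd : IsBoundedUnder (· ≥ ·) atTop (partialDensity E) := by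
    refine Filter.isBoundedUnder_of ⟨0, fun k => ?_⟩
    have h0 : (0:ℝ) ≤ partialDensity E k := by
      unfold partialDensity
      positivity
    exact h0
  have hev : ∀ᶠ k in atTop, a < partialDensity E k :=
    eventually_lt_of_lt_liminf ha2 hbdd
  obtain ⟨N₀, hN₀⟩ := eventually_atTop.mp hev
  obtain ⟨N₁, hN₁⟩ := exists_nat_gt (1/(2*a-1))
  refine ⟨max N₀ N₁, fun n hn => ?_⟩
  by_contra hw
  have hkey := key_bound A C n hw
  set m := n.factorial with hm
  set M := (n+1).factorial with hM
  have hn0 : N₀ ≤ n := le_trans (le_max_left _ _) hn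
  have hn1 : N₁ ≤ n := le_trans (le_max_right _ _) hn
  have hMN₀ : N₀ ≤ M := by
    have : n + 1 ≤ M := Nat.self_le_factorial (n+1)
    omega
  have h1 : a < partialDensity E M := hN₀ M hMN₀
  unfold partialDensity at h1
  set c := ((Finset.range M).filter (fun k => k ∈ E)).card with hc
  have h1' : a < (c:ℝ) / (M:ℝ) := by
    convert h1 using 3
    exact filter_card_eq _ _
  have hMpos : (0:ℝ) < (M:ℝ) := by exact_mod_cast Nat.factorial_pos (n+1)
  have hm1' : 1 ≤ m := Nat.one_le_iff_ne_zero.mpr (Nat.factorial_ne_zero n)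
  have hm1 : (1:ℝ) ≤ (m:ℝ) := by exact_mod_cast hm1'
  have hMm : (M:ℝ) = ((n:ℝ)+1) * (m:ℝ) := by
    have : M = (n+1) * m := Nat.factorial_succ n
    rw [this]; push_cast; ring
  have hcast : (c:ℝ) * 2 ≤ (M:ℝ) + (m:ℝ) := by exact_mod_cast (by omega : c * 2 ≤ M + m)
  have hna : (1:ℝ) < (2*a-1) * ((n:ℝ)+1) := by
    have h2a : (0:ℝ) < 2*a-1 := by linarith
    have hbig : 1/(2*a-1) < (n:ℝ)+1 := by
      have : (N₁:ℝ) ≤ (n:ℝ) := by exact_mod_cast hn1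
      linarith
    calc (1:ℝ) = (2*a-1) * (1/(2*a-1)) := by field_simp
    _ < (2*a-1) * ((n:ℝ)+1) := by exact mul_lt_mul_of_pos_left hbig h2a
  have key2 : (M:ℝ) + (m:ℝ) < 2 * a * (M:ℝ) := by
    nlinarith [mul_pos (by linarith : (0:ℝ) < (2*a-1)*((n:ℝ)+1) - 1)
      (by linarith : (0:ℝ) < (m:ℝ))]
  have hlt : (c:ℝ) / (M:ℝ) < a := by
    rw [div_lt_iff₀ hMpos]
    linarith
  linarith

lemma cntFun_diff {cb : ℕ → Bool} {C : Set ℕ} (hcb : ∀ k, cb k = true ↔ k ∈ C)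
    {m M : ℕ} (h : m ≤ M) :
    cntFun cb M - cntFun cb m = ((Finset.Ico m M).filter (fun k => k ∈ C)).card := by
  have hsplit : ((Finset.range M).filter (fun k => k ∈ C)).card
      = ((Finset.range m).filter (fun k => k ∈ C)).card
        + ((Finset.Ico m M).filter (fun k => k ∈ C)).card := by
    rw [Finset.range_eq_Ico, ← Finset.Ico_union_Ico_eq_Ico (Nat.zero_le m) h,
      Finset.filter_union, Finset.card_union_of_disjoint
        (Finset.disjoint_filter_filter (Finset.Ico_disjoint_Ico_consecutive 0 m M)),
        Finset.range_eq_Ico]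
  rw [cntFun_eq hcb, cntFun_eq hcb, hsplit]
  omega

lemma part1 (A C : Set ℕ) (hC : IsComputableSet C)
    (hd : 1 / 2 < lowerDensity {n | n ∈ calI A ↔ n ∈ C}) : IsComputableSet A := by
  obtain ⟨N, hmaj⟩ := majority_correct A C hd
  obtain ⟨cb, cbcomp', hcbeq⟩ := ComputablePred.computable_iff.mp hC
  have cbcomp : Computable cb := cbcomp'
  have hcb : ∀ k, cb k = true ↔ k ∈ C := by
    intro k
    have := congrFun hcbeq k
    simp only [eq_iff_iff] at this
    exact this.symm
  set g : ℕ → Bool := fun n => decide ((n+1).factorial - n.factorial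
    < 2 * (cntFun cb ((n+1).factorial) - cntFun cb n.factorial)) with hg
  have hgp : Computable g := by
    have h1 : Computable (fun n : ℕ => (n+1).factorial - n.factorial) :=
      (Primrec.nat_sub.comp (primrec_factorial.comp Primrec.succ) primrec_factorial).to_comp
    have h2 : Computable (fun n : ℕ =>
        2 * (cntFun cb ((n+1).factorial) - cntFun cb n.factorial)) :=
      (Primrec.nat_mul.to_comp).comp (Computable.const 2)
        ((Primrec.nat_sub.to_comp).comp
          ((cntFun_computable cbcomp).comp (primrec_factorial.comp Primrec.succ).to_comp)
          ((cntFun_computable cbcomp).comp primrec_factorial.to_comp))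
    exact (Primrec.nat_lt.decide.to_comp).comp h1 h2
  set L : List Bool := (List.range N).map (fun k => decide (k ∈ A)) with hLdef
  set f : ℕ → Bool := fun n => (L[n]?).getD (g n) with hf
  have hfp : Computable f :=
    Computable.option_getD
      ((Primrec.list_getElem?.to_comp).comp (Computable.const L) Computable.id) hgp
  refine ComputablePred.computable_iff.mpr ⟨f, hfp, ?_⟩
  funext n
  apply propext
  by_cases hn : n < N
  · have hget : L[n]? = some (decide (n ∈ A)) := by
      rw [hLdef]
      simp [List.getElem?_range, hn]
    have : f n = decide (n ∈ A) := by rw [hf]; simp [hget]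
    rw [this]
    simp
  · push_neg at hn
    have hget : L[n]? = none := by
      rw [List.getElem?_eq_none_iff]
      simpa [hLdef] using hn
    have hfn : f n = g n := by rw [hf]; simp [hget]
    have hdiff : cntFun cb ((n+1).factorial) - cntFun cb n.factorial
        = ((Finset.Ico n.factorial ((n+1).factorial)).filter (fun k => k ∈ C)).card :=
      cntFun_diff hcb (Nat.factorial_le (by omega))
    rw [hfn, hg]
    simp only [decide_eq_true_eq, hdiff]
    exact (hmaj n hn)

theorem majority_vote_calI (A : Set ℕ) :
    (∀ C : Set ℕ, IsComputableSet C →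
      1 / 2 < lowerDensity {n | n ∈ calI A ↔ n ∈ C} → IsComputableSet A) ∧
    (¬ IsComputableSet A → gammaBound (calI A) ≤ 1 / 2) := by
  refine ⟨fun C hC hd => part1 A C hC hd, fun hA => ?_⟩
  apply Real.sSup_le _ (by norm_num)
  rintro r ⟨C, hC, hr⟩
  by_contra h
  push_neg at h
  exact hA (part1 A C hC (lt_of_lt_of_le h hr))
end

section
/- Let I_n = [n!, (n+1)!) and 𝓘(A) = ⋃_{n ∈ A} I_n for A ⊆ ℕ. If C is the set of even numbers, then the density of {n : 𝓘(A)(n) = C(n)} exists and equals 1/2. -/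
open Filter Topology
open scoped symmDiff Classical

-- count of evens below n
lemma even_count (n : ℕ) : ((Finset.range n).filter (fun k => Even k)).card = (n+1)/2 := by
  induction n with
  | zero => simp
  | succ n ih =>
    rw [Finset.range_add_one, Finset.filter_insert]
    by_cases h : Even n
    · rw [if_pos h, Finset.card_insert_of_notMem (by simp), ih]
      obtain ⟨m, rfl⟩ := h; omega
    · rw [if_neg h, ih]
      rw [Nat.not_even_iff] at h; omega

lemma odd_count (n : ℕ) : ((Finset.range n).filter (fun k => ¬ Even k)).card = n/2 := by
  have h := Finset.card_filter_add_card_filter_not (s := Finset.range n)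
    (p := fun k => Even k)
  rw [even_count] at h
  simp only [Finset.card_range] at h
  omega

lemma cnt_split (S : ℕ → Prop) [DecidablePred S] (a b : ℕ) (hab : a ≤ b) :
    ((Finset.range b).filter (fun k => S k)).card
      = ((Finset.range a).filter (fun k => S k)).card
        + ((Finset.Ico a b).filter (fun k => S k)).card := by
  rw [Finset.range_eq_Ico, Finset.range_eq_Ico, ← Finset.Ico_union_Ico_eq_Ico (Nat.zero_le a) hab,
    Finset.filter_union,
    Finset.card_union_of_disjoint
      (Finset.disjoint_filter_filter (Finset.Ico_disjoint_Ico_consecutive 0 a b))]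

lemma even_count_Ico (a b : ℕ) (hab : a ≤ b) :
    ((Finset.Ico a b).filter (fun k => Even k)).card = (b+1)/2 - (a+1)/2 := by
  have h := cnt_split (fun k => Even k) a b hab
  rw [even_count, even_count] at h; omega

lemma odd_count_Ico (a b : ℕ) (hab : a ≤ b) :
    ((Finset.Ico a b).filter (fun k => ¬ Even k)).card = b/2 - a/2 := by
  have h := cnt_split (fun k => ¬ Even k) a b hab
  rw [odd_count, odd_count] at h; omega

lemma half_close (n : ℕ) : |((((n+1)/2 : ℕ)) : ℝ) - n/2| ≤ 1/2 := by
  rcases Nat.even_or_odd n with ⟨m, rfl⟩ | ⟨m, rfl⟩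
  · rw [show (m+m+1)/2 = m from by omega]
    push_cast; rw [abs_le]; constructor <;> linarith
  · rw [show (2*m+1+1)/2 = m+1 from by omega]
    push_cast; rw [abs_le]; constructor <;> linarith

lemma half_close' (n : ℕ) : |(((n/2 : ℕ)) : ℝ) - n/2| ≤ 1/2 := by
  rcases Nat.even_or_odd n with ⟨m, rfl⟩ | ⟨m, rfl⟩
  · rw [show (m+m)/2 = m from by omega]
    push_cast; rw [abs_le]; constructor <;> linarith
  · rw [show (2*m+1)/2 = m from by omega]
    push_cast; rw [abs_le]; constructor <;> linarith

-- membership in calI on interval j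
lemma mem_calI_iff (A : Set ℕ) (j k : ℕ) (h1 : Nat.factorial j ≤ k)
    (h2 : k < Nat.factorial (j+1)) : k ∈ calI A ↔ j ∈ A := by
  constructor
  · rintro hk
    simp only [calI, Set.mem_iUnion, Set.mem_Ico] at hk
    obtain ⟨n, hn, hk1, hk2⟩ := hk
    rcases lt_trichotomy n j with h | rfl | h
    · have : Nat.factorial (n+1) ≤ Nat.factorial j := Nat.factorial_le h
      omega
    · exact hn
    · have : Nat.factorial (j+1) ≤ Nat.factorial n := Nat.factorial_le h
      omega
  · intro hj
    simp only [calI, Set.mem_iUnion, Set.mem_Ico]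
    exact ⟨j, hj, h1, h2⟩

noncomputable def scnt (A : Set ℕ) (n : ℕ) : ℕ :=
  ((Finset.range n).filter (fun k => k ∈ ({m | m ∈ calI A ↔ Even m} : Set ℕ))).card

lemma cnt_Ico_bound (A : Set ℕ) (j a b : ℕ) (hja : Nat.factorial j ≤ a) (hab : a ≤ b)
    (hb : b ≤ Nat.factorial (j+1)) :
    |((((Finset.Ico a b).filter
        (fun k => k ∈ ({m | m ∈ calI A ↔ Even m} : Set ℕ))).card : ℝ) - ((b:ℝ) - a)/2)| ≤ 1 := by
  by_cases hA : j ∈ A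
  · have heq : (Finset.Ico a b).filter (fun k => k ∈ ({m | m ∈ calI A ↔ Even m} : Set ℕ))
        = (Finset.Ico a b).filter (fun k => Even k) := by
      apply Finset.filter_congr
      intro k hk
      rw [Finset.mem_Ico] at hk
      simp only [Set.mem_setOf_eq]
      rw [mem_calI_iff A j k (le_trans hja hk.1) (lt_of_lt_of_le hk.2 hb)]
      tauto
    rw [heq, even_count_Ico a b hab]
    have hle : (a+1)/2 ≤ (b+1)/2 := Nat.div_le_div_right (by omega)
    rw [Nat.cast_sub hle]
    have h1 := abs_le.mp (half_close a)
    have h2 := abs_le.mp (half_close b)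
    rw [abs_le]; constructor <;> linarith
  · have heq : (Finset.Ico a b).filter (fun k => k ∈ ({m | m ∈ calI A ↔ Even m} : Set ℕ))
        = (Finset.Ico a b).filter (fun k => ¬ Even k) := by
      apply Finset.filter_congr
      intro k hk
      rw [Finset.mem_Ico] at hk
      simp only [Set.mem_setOf_eq]
      rw [mem_calI_iff A j k (le_trans hja hk.1) (lt_of_lt_of_le hk.2 hb)]
      tauto
    rw [heq, odd_count_Ico a b hab]
    have hle : a/2 ≤ b/2 := Nat.div_le_div_right hab
    rw [Nat.cast_sub hle]
    have h1 := abs_le.mp (half_close' a)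
    have h2 := abs_le.mp (half_close' b)
    rw [abs_le]; constructor <;> linarith

lemma scnt_split (A : Set ℕ) (a b : ℕ) (hab : a ≤ b) :
    scnt A b = scnt A a
      + ((Finset.Ico a b).filter (fun k => k ∈ ({m | m ∈ calI A ↔ Even m} : Set ℕ))).card :=
  cnt_split _ a b hab

lemma scnt_factorial_bound (A : Set ℕ) (j : ℕ) :
    |((scnt A (Nat.factorial j) : ℝ) - (Nat.factorial j : ℝ)/2)| ≤ j + 1 := by
  induction j with
  | zero =>
    have h0 : (0 : ℕ) ∉ calI A := by
      simp only [calI, Set.mem_iUnion, Set.mem_Ico]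
      rintro ⟨n, _, h, _⟩
      exact absurd h (by simpa using (Nat.factorial_pos n).ne')
    have : scnt A 1 = 0 := by
      unfold scnt
      rw [Finset.card_eq_zero, Finset.filter_eq_empty_iff]
      intro k hk
      rw [Finset.mem_range] at hk
      interval_cases k
      simp [Set.mem_setOf_eq, h0]
    rw [Nat.factorial_zero, this]
    rw [abs_le]
    norm_num
  | succ j ih =>
    have hle : Nat.factorial j ≤ Nat.factorial (j+1) := Nat.factorial_le (by omega)
    have hsplit := scnt_split A (Nat.factorial j) (Nat.factorial (j+1)) hle
    have hico := cnt_Ico_bound A j (Nat.factorial j) (Nat.factorial (j+1)) le_rfl hle le_rfl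
    rw [hsplit]
    have h1 := abs_le.mp ih
    have h2 := abs_le.mp hico
    rw [abs_le]; constructor <;> push_cast <;> linarith

lemma scnt_bound (A : Set ℕ) (j N : ℕ) (h1 : Nat.factorial j ≤ N) (h2 : N ≤ Nat.factorial (j+1)) :
    |((scnt A N : ℝ) - (N : ℝ)/2)| ≤ j + 2 := by
  have hsplit := scnt_split A (Nat.factorial j) N h1
  have hico := cnt_Ico_bound A j (Nat.factorial j) N le_rfl h1 h2
  have hfac := abs_le.mp (scnt_factorial_bound A j)
  have h2' := abs_le.mp hico
  rw [hsplit]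
  push_cast
  rw [abs_le]; constructor <;> linarith

lemma aux_tendsto : Tendsto (fun k : ℕ => ((k:ℝ)+2)/(Nat.factorial k)) atTop (𝓝 0) := by
  have h2 := (FloorSemiring.tendsto_pow_div_factorial_atTop (2:ℝ)).const_mul (2:ℝ)
  rw [mul_zero] at h2
  apply squeeze_zero (fun k => by positivity) _ h2
  intro k
  have hk : (k:ℝ) + 2 ≤ 2 * 2^k := by
    have h1 := Nat.lt_two_pow_self (n := k)
    have h3 : (1:ℕ) ≤ 2^k := Nat.one_le_two_pow
    have : k + 2 ≤ 2 * 2^k := by omega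
    exact_mod_cast this
  rw [← mul_div_assoc]
  gcongr

theorem calI_agree_even_density' (A : Set ℕ) :
    Tendsto (fun n => ((Finset.range n).filter
      (fun k => k ∈ ({m | m ∈ calI A ↔ Even m} : Set ℕ))).card / (n:ℝ)) atTop (𝓝 (1/2)) := by
  rw [Metric.tendsto_atTop]
  intro ε hε
  obtain ⟨M, hM⟩ := Metric.tendsto_atTop.mp (aux_tendsto) ε hε
  refine ⟨max (Nat.factorial M) 3, fun N hN => ?_⟩
  have hN3 : 3 ≤ N := le_trans (le_max_right _ _) hN
  have hNM : Nat.factorial M ≤ N := le_trans (le_max_left _ _) hN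
  set j := Nat.findGreatest (fun m => Nat.factorial m ≤ N) N with hj
  have hj1 : Nat.factorial j ≤ N :=
    Nat.findGreatest_spec (P := fun m => Nat.factorial m ≤ N) (m := 1) (by omega)
      (by simp [Nat.factorial]; omega)
  have hj2 : N < Nat.factorial (j+1) := by
    by_contra h
    push_neg at h
    have hjlt : j + 1 ≤ N := le_trans (Nat.self_le_factorial _) h
    exact Nat.findGreatest_is_greatest (lt_add_one j) hjlt h
  have hjM : M ≤ j := by
    by_contra h
    push_neg at h
    have : Nat.factorial (j+1) ≤ Nat.factorial M := Nat.factorial_le (by omega)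
    omega
  have hbound := scnt_bound A j N hj1 (le_of_lt hj2)
  have hNpos : (0:ℝ) < N := by positivity
  have hfacpos : (0:ℝ) < Nat.factorial j := by positivity
  rw [Real.dist_eq]
  have hhalf : (N:ℝ)/2/N = 1/2 := by
    rw [div_div, mul_comm, ← div_div, div_self hNpos.ne']
  have heq : ((scnt A N : ℝ))/N - 1/2 = ((scnt A N : ℝ) - (N:ℝ)/2)/N := by
    rw [sub_div, hhalf]
  show |((scnt A N : ℝ))/N - 1/2| < ε
  rw [heq, abs_div, abs_of_pos hNpos]
  have hMj := hM j hjM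
  rw [Real.dist_eq, sub_zero, abs_of_nonneg (by positivity)] at hMj
  calc |(scnt A N : ℝ) - (N:ℝ)/2| / N ≤ ((j:ℝ)+2)/N := by gcongr
    _ ≤ ((j:ℝ)+2)/(Nat.factorial j) := by gcongr
    _ < ε := hMj

theorem calI_agree_even_density (A : Set ℕ) :
    HasDensity {n | n ∈ calI A ↔ Even n} (1 / 2) := by
  have h := calI_agree_even_density' A
  unfold HasDensity partialDensity
  convert h using 2 with n
  congr!
end

section
/- If γ(A) = 1 constructively, then A is coarsely computable. That is, if there is a uniformly computable sequence of computable sets C₀, C₁, ... with ρ̄(A △ C_n) < 2^{-n} for all n, then there is a computable set C with ρ(A △ C) = 0. -/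
open Filter Topology
open scoped symmDiff Classical

namespace CGO


/-- count of `i < t` with `p i`. -/
def countTo (p : ℕ → Bool) (t : ℕ) : ℕ :=
  Nat.rec 0 (fun i ih => ih + cond (p i) 1 0) t

lemma countTo_zero (p : ℕ → Bool) : countTo p 0 = 0 := rfl
lemma countTo_succ (p : ℕ → Bool) (t : ℕ) :
    countTo p (t+1) = countTo p t + cond (p t) 1 0 := rfl

lemma countTo_eq_card (p : ℕ → Bool) (t : ℕ) :
    countTo p t = ((Finset.range t).filter (fun x => p x = true)).card := by
  induction t with
  | zero => simp [countTo_zero]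
  | succ t ih =>
    rw [countTo_succ, ih, Finset.range_add_one, Finset.filter_insert]
    cases h : p t <;> simp [Finset.card_insert_of_notMem, Finset.mem_filter]

/-- bounded forall as a Bool. -/
def allB (p : ℕ → Bool) (N : ℕ) : Bool :=
  Nat.rec true (fun m ih => ih && p m) N

lemma allB_eq_true {p : ℕ → Bool} {N : ℕ} :
    allB p N = true ↔ ∀ m < N, p m = true := by
  induction N with
  | zero => simp [allB]
  | succ N ih =>
    show (allB p N && p N) = true ↔ _
    rw [Bool.and_eq_true, ih]
    constructor
    · rintro ⟨h1, h2⟩ m hm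
      rcases Nat.lt_succ_iff_lt_or_eq.1 hm with h | rfl
      · exact h1 m h
      · exact h2
    · intro h
      exact ⟨fun m hm => h m (hm.trans (Nat.lt_succ_self _)), h N (Nat.lt_succ_self _)⟩

variable (C : ℕ → ℕ → Bool)

def dcount (m n k : ℕ) : ℕ :=
  countTo (fun x => decide (2^k - 1 ≤ x) && (C m x != C n x)) (2^(k+1) - 1)

def trustb (m n k : ℕ) : Bool := decide (dcount C m n k * 2 ^ m < 2^(k+2))

def Pb (k N : ℕ) : Bool := allB (fun m => trustb C m N k) N

def Nsel (k : ℕ) : ℕ := Nat.findGreatest (fun N => Pb C k N = true) k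

def idx (x : ℕ) : ℕ := Nat.log 2 (x+1)

def Cfin (x : ℕ) : Bool := C (Nsel C (idx x)) x

-- Computability
lemma primrec_pow : Primrec₂ ((· ^ ·) : ℕ → ℕ → ℕ) :=
  Primrec₂.unpaired'.1 Nat.Primrec.pow

lemma log_eq_findGreatest (x : ℕ) :
    Nat.log 2 (x+1) = Nat.findGreatest (fun j => 2^j ≤ x+1) (x+1) := by
  apply Nat.log_eq_of_pow_le_of_lt_pow
  · exact Nat.findGreatest_spec (P := fun j => 2^j ≤ x+1) (Nat.zero_le _) (by simp)
  · by_contra h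
    push_neg at h
    set m := Nat.findGreatest (fun j => 2^j ≤ x+1) (x+1) with hm
    have h1 : m + 1 ≤ x + 1 := by
      have := Nat.lt_two_pow_self (n := m+1)
      omega
  
    have := Nat.le_findGreatest (P := fun j => 2^j ≤ x+1) h1 h
    omega

lemma primrec_idx : Primrec idx := by
  have hp : PrimrecRel (fun (x j : ℕ) => 2^j ≤ x+1) :=
    Primrec.nat_le.comp₂ (primrec_pow.comp₂ (Primrec₂.const 2) Primrec₂.right)
      (Primrec.succ.comp₂ Primrec₂.left)
  exact (Primrec.nat_findGreatest Primrec.succ hp).of_eq fun x =>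
    (log_eq_findGreatest x).symm

lemma computable_findGreatest {α : Type} [Primcodable α] {p : α → ℕ → Bool} {f : α → ℕ}
    (hf : Computable f) (hp : Computable₂ p) :
    Computable fun x => Nat.findGreatest (fun n => p x n = true) (f x) := by
  have hh : Computable₂ (fun (x : α) (ni : ℕ × ℕ) =>
      cond (p x (ni.1+1)) (ni.1 + 1) ni.2) := by
    have h1 : Computable (fun q : α × ℕ × ℕ => cond (p q.1 (q.2.1+1)) (q.2.1 + 1) q.2.2) :=
      Computable.cond
        (hp.comp Computable.fst (Computable.succ.comp (Computable.fst.comp Computable.snd)))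
        (Computable.succ.comp (Computable.fst.comp Computable.snd))
        (Computable.snd.comp Computable.snd)
    exact h1
  have := Computable.nat_rec hf (Computable.const 0) hh
  refine this.of_eq fun x => ?_
  induction f x with
  | zero => rfl
  | succ n ih =>
    simp only [Bool.cond_eq_ite] at ih
    simp [Nat.findGreatest, Bool.cond_eq_ite, ih]

lemma computable_dcount (hC : Computable₂ C) :
    Computable (fun a : ℕ × ℕ × ℕ => dcount C a.1 a.2.1 a.2.2) := by
  have hpow : Computable₂ ((· ^ ·) : ℕ → ℕ → ℕ) := Primrec₂.to_comp primrec_pow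
  have hble : Computable₂ (fun x y : ℕ => decide (x ≤ y)) := Primrec₂.to_comp Primrec.nat_le.decide
  have hbne : Computable₂ (fun b c : Bool => b != c) := Primrec₂.to_comp (Primrec.dom_bool₂ _)
  have hf : Computable (fun a : ℕ × ℕ × ℕ => 2^(a.2.2+1) - 1) :=
    (Primrec₂.to_comp Primrec.nat_sub).comp
      (hpow.comp (Computable.const 2) (Computable.succ.comp
        (Computable.snd.comp Computable.snd))) (Computable.const 1)
  have hband : Computable₂ (fun b c : Bool => b && c) := Primrec₂.to_comp (Primrec.dom_bool₂ _)
  have hi : Computable (fun q : (ℕ × ℕ × ℕ) × ℕ × ℕ => q.2.1) :=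
    Computable.fst.comp Computable.snd
  have h1 : Computable (fun q : (ℕ × ℕ × ℕ) × ℕ × ℕ =>
      q.2.2 + cond (decide (2 ^ q.1.2.2 - 1 ≤ q.2.1) && (C q.1.1 q.2.1 != C q.1.2.1 q.2.1)) 1 0) := by
    refine (Primrec₂.to_comp Primrec.nat_add).comp (Computable.snd.comp Computable.snd) ?_
    refine Computable.cond ?_ (Computable.const 1) (Computable.const 0)
    refine hband.comp ?_ ?_
    · exact hble.comp ((Primrec₂.to_comp Primrec.nat_sub).comp
        (hpow.comp (Computable.const 2) (Computable.snd.comp (Computable.snd.comp Computable.fst)))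
        (Computable.const 1)) hi
    · exact hbne.comp (hC.comp (Computable.fst.comp Computable.fst) hi)
        (hC.comp (Computable.fst.comp (Computable.snd.comp Computable.fst)) hi)
  have hcond : Computable₂ (fun (a : ℕ × ℕ × ℕ) (iih : ℕ × ℕ) =>
      iih.2 + cond (decide (2 ^ a.2.2 - 1 ≤ iih.1) && (C a.1 iih.1 != C a.2.1 iih.1)) 1 0) := h1
  have := Computable.nat_rec hf (Computable.const 0) hcond
  refine this.of_eq fun a => ?_
  show _ = countTo _ _
  generalize (2^(a.2.2+1) - 1) = t
  induction t with
  | zero => rfl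
  | succ t ih => rw [countTo_succ, ← ih]

lemma computable_Cfin (hC : Computable₂ C) : Computable (Cfin C) := by
  have hdc := computable_dcount C hC
  have hpow : Computable₂ ((· ^ ·) : ℕ → ℕ → ℕ) := Primrec₂.to_comp primrec_pow
  have hblt : Computable₂ (fun x y : ℕ => decide (x < y)) := Primrec₂.to_comp Primrec.nat_lt.decide
  -- trustb as computable function of (m, n, k)
  have htr : Computable (fun a : ℕ × ℕ × ℕ => trustb C a.1 a.2.1 a.2.2) := by
    refine hblt.comp ?_ ?_
    · exact (Primrec₂.to_comp Primrec.nat_mul).comp hdc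
        (hpow.comp (Computable.const 2) Computable.fst)
    · exact hpow.comp (Computable.const 2)
        ((Primrec₂.to_comp Primrec.nat_add).comp (Computable.snd.comp Computable.snd) (Computable.const 2))
  -- Pb as computable function of (k, N)
  have hPb : Computable₂ (Pb C) := by
    have hh : Computable₂ (fun (a : ℕ × ℕ) (mih : ℕ × Bool) =>
        mih.2 && trustb C mih.1 a.2 a.1) := by
      have hband : Computable₂ (fun b c : Bool => b && c) := Primrec₂.to_comp (Primrec.dom_bool₂ _)
      have hgq : Computable (fun q : (ℕ × ℕ) × ℕ × Bool => ((q.2.1, q.1.2, q.1.1) : ℕ × ℕ × ℕ)) :=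
        Computable.pair (Computable.fst.comp Computable.snd)
          (Computable.pair (Computable.snd.comp Computable.fst)
            (Computable.fst.comp Computable.fst))
      have h2 : Computable (fun q : (ℕ × ℕ) × ℕ × Bool => trustb C q.2.1 q.1.2 q.1.1) :=
        Computable.comp (f := fun a : ℕ × ℕ × ℕ => trustb C a.1 a.2.1 a.2.2)
          (g := fun q : (ℕ × ℕ) × ℕ × Bool => ((q.2.1, q.1.2, q.1.1) : ℕ × ℕ × ℕ)) htr hgq
      have h1 : Computable (fun q : (ℕ × ℕ) × ℕ × Bool =>
          q.2.2 && trustb C q.2.1 q.1.2 q.1.1) :=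
        Computable₂.comp (f := fun b c : Bool => b && c)
          (g := fun q : (ℕ × ℕ) × ℕ × Bool => q.2.2)
          (h := fun q : (ℕ × ℕ) × ℕ × Bool => trustb C q.2.1 q.1.2 q.1.1)
          hband (Computable.snd.comp Computable.snd) h2
      exact h1
    have := Computable.nat_rec (Computable.snd (α := ℕ) (β := ℕ))
      (Computable.const true) hh
    have key : ∀ (q : ℕ → Bool) (N : ℕ),
        (Nat.rec true (fun y IH => (y, IH).2 && q (y, IH).1) N : Bool) = allB q N := by
      intro q N
      induction N with
      | zero => rfl
      | succ N ih => show (_ && _) = (_ && _); rw [ih]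
    exact this.of_eq fun p => key (fun m => trustb C m p.2 p.1) p.2
  have hNsel : Computable (Nsel C) :=
    computable_findGreatest Computable.id hPb
  exact hC.comp (hNsel.comp (Primrec.to_comp primrec_idx)) Computable.id


noncomputable def cnt (S : Set ℕ) (s : Finset ℕ) : ℕ := (s.filter (fun k => k ∈ S)).card

def Iiv (k : ℕ) : Finset ℕ := Finset.Ico (2^k - 1) (2^(k+1) - 1)

lemma partialDensity_eq (S : Set ℕ) (n : ℕ) :
    partialDensity S n = (cnt S (Finset.range n) : ℝ) / n := rfl

lemma cnt_mono (S : Set ℕ) {s t : Finset ℕ} (h : s ⊆ t) : cnt S s ≤ cnt S t :=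
  Finset.card_le_card (Finset.filter_subset_filter _ h)

lemma cnt_le_card (S : Set ℕ) (s : Finset ℕ) : cnt S s ≤ s.card :=
  Finset.card_filter_le _ _

lemma cnt_union_le {U S T : Set ℕ} (h : U ⊆ S ∪ T) (s : Finset ℕ) :
    cnt U s ≤ cnt S s + cnt T s := by
  have hsub : s.filter (fun k => k ∈ U) ⊆
      s.filter (fun k => k ∈ S) ∪ s.filter (fun k => k ∈ T) := by
    intro x hx
    rw [Finset.mem_filter] at hx
    rcases h hx.2 with hS | hT
    · exact Finset.mem_union_left _ (Finset.mem_filter.2 ⟨hx.1, hS⟩)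
    · exact Finset.mem_union_right _ (Finset.mem_filter.2 ⟨hx.1, hT⟩)
  calc cnt U s ≤ (s.filter (fun k => k ∈ S) ∪ s.filter (fun k => k ∈ T)).card :=
        Finset.card_le_card hsub
    _ ≤ _ := Finset.card_union_le _ _

lemma cnt_congr {S T : Set ℕ} (s : Finset ℕ) (h : ∀ x ∈ s, x ∈ S ↔ x ∈ T) :
    cnt S s = cnt T s := by
  unfold cnt
  congr 1
  exact Finset.filter_congr h

lemma cnt_union_disj (S : Set ℕ) {s t : Finset ℕ} (h : Disjoint s t) :
    cnt S (s ∪ t) = cnt S s + cnt S t := by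
  unfold cnt
  rw [Finset.filter_union, Finset.card_union_of_disjoint
    (Finset.disjoint_filter_filter h)]

lemma pd_nonneg (S : Set ℕ) (n : ℕ) : 0 ≤ partialDensity S n := by
  rw [partialDensity_eq]; positivity

lemma pd_le_one (S : Set ℕ) (n : ℕ) : partialDensity S n ≤ 1 := by
  rw [partialDensity_eq]
  rcases Nat.eq_zero_or_pos n with rfl | hn
  · simp
  · rw [div_le_one (by exact_mod_cast hn)]
    have := cnt_le_card S (Finset.range n)
    rw [Finset.card_range] at this
    exact_mod_cast this

lemma cnt_range_pow (S : Set ℕ) (K : ℕ) :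
    cnt S (Finset.range (2^K - 1)) = ∑ j ∈ Finset.range K, cnt S (Iiv j) := by
  induction K with
  | zero => simp [cnt]
  | succ K ih =>
    have h1 : (1:ℕ) ≤ 2^K := Nat.one_le_two_pow
    have h2 : (2:ℕ)^K - 1 ≤ 2^(K+1) - 1 := by
      have : (2:ℕ)^K ≤ 2^(K+1) := Nat.pow_le_pow_right (by norm_num) (Nat.le_succ _)
      omega
    have hsplit : Finset.range (2^(K+1) - 1) =
        Finset.range (2^K - 1) ∪ Iiv K := by
      rw [Finset.range_eq_Ico, Finset.range_eq_Ico]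
      exact (Finset.Ico_union_Ico_eq_Ico (Nat.zero_le _) h2).symm
    have hdisj : Disjoint (Finset.range (2^K - 1)) (Iiv K) := by
      rw [Finset.range_eq_Ico]
      exact Finset.Ico_disjoint_Ico_consecutive 0 _ _
    rw [hsplit, cnt_union_disj S hdisj, ih, Finset.sum_range_succ]

lemma mem_Iiv {x k : ℕ} : x ∈ Iiv k ↔ 2^k - 1 ≤ x ∧ x < 2^(k+1) - 1 := Finset.mem_Ico

lemma idx_eq_of_mem {x k : ℕ} (hx : x ∈ Iiv k) : idx x = k := by
  rw [mem_Iiv] at hx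
  have h1 : (1:ℕ) ≤ 2^k := Nat.one_le_two_pow
  unfold idx
  exact Nat.log_eq_of_pow_le_of_lt_pow (by omega) (by omega)

lemma dcount_eq (C : ℕ → ℕ → Bool) (m n k : ℕ) :
    dcount C m n k = cnt ({x | C m x = true} ∆ {x | C n x = true}) (Iiv k) := by
  rw [dcount, countTo_eq_card]
  unfold cnt
  have hset : (Finset.range (2^(k+1) - 1)).filter
      (fun x => (decide (2^k - 1 ≤ x) && (C m x != C n x)) = true) =
      (Iiv k).filter (fun x => (C m x != C n x) = true) := by
    ext x
    simp only [Finset.mem_filter, Finset.mem_range, Bool.and_eq_true, decide_eq_true_eq,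
      mem_Iiv]
    tauto
  rw [hset]
  congr 1
  apply Finset.filter_congr
  intro x _
  rw [bne_iff_ne, Set.mem_symmDiff]
  simp only [Set.mem_setOf_eq]
  cases hm : C m x <;> cases hn : C n x <;> simp

lemma trustb_iff {C : ℕ → ℕ → Bool} {m n k : ℕ} :
    trustb C m n k = true ↔ dcount C m n k * 2^m < 2^(k+2) := by
  rw [trustb, decide_eq_true_eq]

lemma Pb_iff {C : ℕ → ℕ → Bool} {k N : ℕ} :
    Pb C k N = true ↔ ∀ m < N, trustb C m N k = true := allB_eq_true

lemma Nsel_spec (C : ℕ → ℕ → Bool) (k : ℕ) : Pb C k (Nsel C k) = true := by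
  unfold Nsel
  exact Nat.findGreatest_spec (P := fun N => Pb C k N = true) (Nat.zero_le k) rfl

lemma Nsel_ge {C : ℕ → ℕ → Bool} {k n : ℕ} (h1 : n ≤ k) (h2 : Pb C k n = true) :
    n ≤ Nsel C k :=
  Nat.le_findGreatest h1 h2


def Cset (C : ℕ → ℕ → Bool) (n : ℕ) : Set ℕ := {k | C n k = true}

lemma exists_pd_lt {S : Set ℕ} {ε : ℝ} (h : upperDensity S < ε) :
    ∃ M, ∀ m ≥ M, partialDensity S m < ε := by
  have hbdd : Filter.IsBoundedUnder (· ≤ ·) Filter.atTop (partialDensity S) :=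
    ⟨1, Filter.eventually_map.2 (Filter.Eventually.of_forall (pd_le_one S))⟩
  have := Filter.eventually_lt_of_limsup_lt h hbdd
  exact Filter.eventually_atTop.1 this

theorem main (A : Set ℕ) (C : ℕ → ℕ → Bool) (hC : Computable₂ C)
    (happrox : ∀ n : ℕ, upperDensity (A ∆ {k | C n k = true}) < (1 / 2) ^ n) :
    ∃ C' : Set ℕ, ComputablePred (· ∈ C') ∧ HasDensity (A ∆ C') 0 := by
  classical
  refine ⟨{x | Cfin C x = true}, ?_, ?_⟩
  · exact ComputablePred.computable_iff.2 ⟨Cfin C, computable_Cfin C hC, rfl⟩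
  set B : Set ℕ := A ∆ {x | Cfin C x = true} with hBdef
  have happrox' : ∀ n : ℕ, upperDensity (A ∆ Cset C n) < (1 / 2) ^ n := happrox
  -- Step 1
  have hA : ∀ n : ℕ, ∃ K, ∀ k ≥ K,
      (cnt (A ∆ Cset C n) (Iiv k) : ℝ) < 2 * (1/2)^n * 2^k := by
    intro n
    obtain ⟨M, hM⟩ := exists_pd_lt (happrox' n)
    refine ⟨M, fun k hk => ?_⟩
    have hk2 : k < 2^k := Nat.lt_two_pow_self
    have hk3 : (2:ℕ)^k ≤ 2^(k+1) := Nat.pow_le_pow_right (by norm_num) (Nat.le_succ _)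
    have htM : M ≤ 2^(k+1) - 1 := by omega
    have hsub : Iiv k ⊆ Finset.range (2^(k+1) - 1) := by
      intro x hx
      rw [mem_Iiv] at hx
      rw [Finset.mem_range]
      omega
    have hmono := cnt_mono (A ∆ Cset C n) hsub
    have hpd := hM _ htM
    rw [partialDensity_eq] at hpd
    have htpos : (0:ℝ) < ((2^(k+1) - 1 : ℕ) : ℝ) := by
      have h1 : (1:ℕ) ≤ 2^(k+1) - 1 := by omega
      exact_mod_cast Nat.lt_of_lt_of_le Nat.zero_lt_one h1
    have hlt : (cnt (A ∆ Cset C n) (Finset.range (2^(k+1) - 1)) : ℝ)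
        < (1/2)^n * ((2^(k+1) - 1 : ℕ) : ℝ) := by
      rw [div_lt_iff₀ htpos] at hpd
      linarith [hpd]
    have htle : (((2^(k+1) - 1 : ℕ)) : ℝ) ≤ 2 * 2^k := by
      have h2 : ((2:ℕ)^(k+1) - 1 : ℕ) ≤ 2^(k+1) := Nat.sub_le _ _
      calc (((2^(k+1) - 1 : ℕ)) : ℝ) ≤ ((2^(k+1) : ℕ) : ℝ) := by exact_mod_cast h2
        _ = 2 * 2^k := by push_cast; ring
    have hpow : (0:ℝ) < (1/2)^n := by positivity
    calc (cnt (A ∆ Cset C n) (Iiv k) : ℝ)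
        ≤ (cnt (A ∆ Cset C n) (Finset.range (2^(k+1) - 1)) : ℝ) := by exact_mod_cast hmono
      _ < (1/2)^n * ((2^(k+1) - 1 : ℕ) : ℝ) := hlt
      _ ≤ (1/2)^n * (2 * 2^k) := by nlinarith
      _ = 2 * (1/2)^n * 2^k := by ring
  -- Step 2: uniform version
  have hA' : ∀ n : ℕ, ∃ K, ∀ k ≥ K, ∀ m ≤ n,
      (cnt (A ∆ Cset C m) (Iiv k) : ℝ) < 2 * (1/2)^m * 2^k := by
    intro n
    induction n with
    | zero =>
      obtain ⟨K, hK⟩ := hA 0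
      refine ⟨K, fun k hk m hm => ?_⟩
      have : m = 0 := Nat.le_zero.1 hm
      subst this
      exact hK k hk
    | succ n ih =>
      obtain ⟨K1, h1⟩ := ih
      obtain ⟨K2, h2⟩ := hA (n+1)
      refine ⟨max K1 K2, fun k hk m hm => ?_⟩
      by_cases hm' : m ≤ n
      · exact h1 k (le_trans (le_max_left _ _) hk) m hm'
      · have : m = n + 1 := by omega
        subst this
        exact h2 k (le_trans (le_max_right _ _) hk)
  -- Step 3: trust
  have hTrust : ∀ n : ℕ, ∃ K, ∀ k ≥ K, ∀ m < n, trustb C m n k = true := by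
    intro n
    obtain ⟨K, hK⟩ := hA' n
    refine ⟨K, fun k hk m hm => ?_⟩
    rw [trustb_iff]
    have hd : dcount C m n k = cnt (Cset C m ∆ Cset C n) (Iiv k) := dcount_eq C m n k
    have h1 := hK k hk m (le_of_lt hm)
    have h2 := hK k hk n le_rfl
    have hsub : cnt (Cset C m ∆ Cset C n) (Iiv k)
        ≤ cnt (A ∆ Cset C m) (Iiv k) + cnt (A ∆ Cset C n) (Iiv k) := by
      apply cnt_union_le
      have htr := symmDiff_triangle (Cset C m) A (Cset C n)
      rw [symmDiff_comm (Cset C m) A] at htr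
      exact htr
    have hcR : (cnt (Cset C m ∆ Cset C n) (Iiv k) : ℝ)
        ≤ (cnt (A ∆ Cset C m) (Iiv k) : ℝ) + (cnt (A ∆ Cset C n) (Iiv k) : ℝ) := by
      exact_mod_cast hsub
    have e1 : ((1:ℝ)/2)^m * 2^m = 1 := by rw [← mul_pow]; norm_num
    have hmn : ((1:ℝ)/2)^n ≤ (1/2)^m :=
      pow_le_pow_of_le_one (by norm_num) (by norm_num) (le_of_lt hm)
    have h2m : (0:ℝ) < 2^m := by positivity
    have h2k : (0:ℝ) < 2^k := by positivity
    have e2 : ((1:ℝ)/2)^n * 2^m ≤ 1 := by nlinarith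
    have e3 : ((2:ℝ))^(k+2) = 4 * 2^k := by ring
    have key : (cnt (Cset C m ∆ Cset C n) (Iiv k) : ℝ) * 2^m < 2^(k+2) := by
      have hmul : (cnt (Cset C m ∆ Cset C n) (Iiv k) : ℝ) * 2^m
          ≤ ((cnt (A ∆ Cset C m) (Iiv k) : ℝ) + (cnt (A ∆ Cset C n) (Iiv k) : ℝ)) * 2^m :=
        mul_le_mul_of_nonneg_right hcR (le_of_lt h2m)
      have hmul2 : ((cnt (A ∆ Cset C m) (Iiv k) : ℝ) + (cnt (A ∆ Cset C n) (Iiv k) : ℝ)) * 2^m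
          < (2*(1/2)^m*2^k + 2*(1/2)^n*2^k) * 2^m := by
        apply mul_lt_mul_of_pos_right _ h2m
        linarith
      have step := lt_of_le_of_lt hmul hmul2
      have expand : (2*(1/2:ℝ)^m*2^k + 2*(1/2)^n*2^k) * 2^m
          = 2*2^k*((1/2)^m*2^m) + 2*2^k*((1/2)^n*2^m) := by ring
      rw [expand, e1, mul_one] at step
      have hnn : (0:ℝ) ≤ 2*2^k := by positivity
      have last : 2*(2:ℝ)^k*((1/2)^n*2^m) ≤ 2*2^k := by nlinarith
      rw [e3]
      linarith
    rw [hd]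
    have : (cnt (Cset C m ∆ Cset C n) (Iiv k) * 2^m : ℕ) < ((2:ℕ)^(k+2)) := by
      exact_mod_cast key
    exact this
  -- Step 4
  have hNge : ∀ n : ℕ, ∃ K, ∀ k ≥ K, n ≤ Nsel C k := by
    intro n
    obtain ⟨K, hK⟩ := hTrust n
    refine ⟨max K n, fun k hk => ?_⟩
    exact Nsel_ge (le_trans (le_max_right _ _) hk)
      (Pb_iff.2 (fun m hm => hK k (le_trans (le_max_left _ _) hk) m hm))
  -- Step 5
  have hBI : ∀ n : ℕ, ∃ K, ∀ k ≥ K, (cnt B (Iiv k) : ℝ) ≤ 6 * (1/2)^n * 2^k := by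
    intro n
    obtain ⟨K1, h1⟩ := hA n
    obtain ⟨K2, h2⟩ := hNge n
    refine ⟨max K1 K2, fun k hk => ?_⟩
    have hN : n ≤ Nsel C k := h2 k (le_trans (le_max_right _ _) hk)
    have hforall : ∀ x ∈ Iiv k, (x ∈ B ↔ x ∈ A ∆ Cset C (Nsel C k)) := by
      intro x hx
      have hidx : idx x = k := idx_eq_of_mem hx
      have hxC : (x ∈ {x | Cfin C x = true}) ↔ x ∈ Cset C (Nsel C k) := by
        unfold Cfin Cset
        rw [Set.mem_setOf_eq, Set.mem_setOf_eq, hidx]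
      rw [hBdef, Set.mem_symmDiff, Set.mem_symmDiff]
      rw [Cset] at hxC
      constructor
      · rintro (⟨ha, hb⟩ | ⟨ha, hb⟩)
        · exact Or.inl ⟨ha, fun hc => hb (hxC.2 hc)⟩
        · exact Or.inr ⟨hxC.1 ha, hb⟩
      · rintro (⟨ha, hb⟩ | ⟨ha, hb⟩)
        · exact Or.inl ⟨ha, fun hc => hb (hxC.1 hc)⟩
        · exact Or.inr ⟨hxC.2 ha, hb⟩
    have hcnt : cnt B (Iiv k) = cnt (A ∆ Cset C (Nsel C k)) (Iiv k) :=
      cnt_congr _ hforall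
    have htri : cnt (A ∆ Cset C (Nsel C k)) (Iiv k)
        ≤ cnt (A ∆ Cset C n) (Iiv k) + cnt (Cset C n ∆ Cset C (Nsel C k)) (Iiv k) :=
      cnt_union_le (symmDiff_triangle A (Cset C n) (Cset C (Nsel C k))) _
    have hsecond : (cnt (Cset C n ∆ Cset C (Nsel C k)) (Iiv k) : ℝ) ≤ 4 * (1/2)^n * 2^k := by
      rcases eq_or_lt_of_le hN with heq | hlt
      · rw [← heq, symmDiff_self]
        have hz : cnt (⊥ : Set ℕ) (Iiv k) = 0 := by
          unfold cnt
          simp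
        rw [hz]
        push_cast
        positivity
      · have hPb := Nsel_spec C k
        have ht := (Pb_iff.1 hPb) n hlt
        rw [trustb_iff] at ht
        have hd : dcount C n (Nsel C k) k = cnt (Cset C n ∆ Cset C (Nsel C k)) (Iiv k) :=
          dcount_eq C n (Nsel C k) k
        rw [hd] at ht
        have htR : (cnt (Cset C n ∆ Cset C (Nsel C k)) (Iiv k) : ℝ) * 2^n < 2^(k+2) := by
          exact_mod_cast ht
        have h2n : (0:ℝ) < 2^n := by positivity
        have hp : (0:ℝ) < (1/2)^n := by positivity
        have e4 : (2:ℝ)^n * (1/2)^n = 1 := by rw [← mul_pow]; norm_num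
        have e3 : ((2:ℝ))^(k+2) = 4 * 2^k := by ring
        calc (cnt (Cset C n ∆ Cset C (Nsel C k)) (Iiv k) : ℝ)
            = ((cnt (Cset C n ∆ Cset C (Nsel C k)) (Iiv k) : ℝ) * 2^n) * (1/2)^n := by
              rw [mul_assoc, e4, mul_one]
          _ ≤ (2^(k+2) : ℝ) * (1/2)^n :=
              mul_le_mul_of_nonneg_right (le_of_lt htR) (le_of_lt hp)
          _ = 4*2^k*(1/2)^n := by rw [e3]
          _ = 4*(1/2)^n*2^k := by ring
    have h1' := h1 k (le_trans (le_max_left _ _) hk)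
    have hcntR : (cnt B (Iiv k) : ℝ)
        ≤ (cnt (A ∆ Cset C n) (Iiv k) : ℝ) + (cnt (Cset C n ∆ Cset C (Nsel C k)) (Iiv k) : ℝ) := by
      rw [hcnt]
      exact_mod_cast htri
    linarith
  -- Final step: density 0
  show HasDensity B 0
  unfold HasDensity
  rw [Metric.tendsto_atTop]
  intro ε hε
  obtain ⟨n, hn⟩ := exists_pow_lt_of_lt_one (show (0:ℝ) < ε/48 by linarith)
    (by norm_num : (1:ℝ)/2 < 1)
  obtain ⟨K, hK⟩ := hBI n
  set c : ℝ := (cnt B (Finset.range (2^K - 1)) : ℝ) with hc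
  have hc0 : 0 ≤ c := Nat.cast_nonneg _
  have hε2 : (0:ℝ) < ε/2 := by linarith
  obtain ⟨T, hT⟩ := exists_nat_gt (c / (ε/2))
  refine ⟨max (2^K) (T+1), fun t htt => ?_⟩
  have ht1 : 2^K ≤ t := le_trans (le_max_left _ _) htt
  have ht2 : T + 1 ≤ t := le_trans (le_max_right _ _) htt
  have htpos : 0 < t := lt_of_lt_of_le (Nat.pow_pos (by norm_num)) ht1
  have hup : t + 1 < 2^(Nat.log 2 (t+1) + 1) := Nat.lt_pow_succ_log_self (by norm_num) (t+1)
  have hlow : 2^(Nat.log 2 (t+1)) ≤ t + 1 := Nat.pow_log_le_self 2 (by omega)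
  set Kt := Nat.log 2 (t+1) with hKt
  have hKKt : K ≤ Kt := by
    have h2Kt : (2:ℕ)^K ≤ t+1 := by omega
    exact (Nat.le_log_iff_pow_le (by norm_num) (by omega)).2 h2Kt
  have hsub : Finset.range t ⊆ Finset.range (2^(Kt+1) - 1) :=
    Finset.range_subset_range.2 (by omega)
  have hsum := cnt_range_pow B (Kt+1)
  have hsplit : ∑ j ∈ Finset.range (Kt+1), cnt B (Iiv j)
      = ∑ j ∈ Finset.range K, cnt B (Iiv j) + ∑ j ∈ Finset.Ico K (Kt+1), cnt B (Iiv j) := by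
    rw [Finset.range_eq_Ico,
      ← Finset.sum_Ico_consecutive _ (Nat.zero_le K) (by omega : K ≤ Kt+1),
      ← Finset.range_eq_Ico]
  have hpow0 : (0:ℝ) ≤ 6 * (1/2)^n := by positivity
  have hIco : (∑ j ∈ Finset.Ico K (Kt+1), (cnt B (Iiv j) : ℝ)) ≤ 6 * (1/2)^n * 2^(Kt+1) := by
    calc (∑ j ∈ Finset.Ico K (Kt+1), (cnt B (Iiv j) : ℝ))
        ≤ ∑ j ∈ Finset.Ico K (Kt+1), 6 * (1/2)^n * 2^j :=
          Finset.sum_le_sum (fun j hj => hK j (Finset.mem_Ico.1 hj).1)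
      _ = 6 * (1/2)^n * ∑ j ∈ Finset.Ico K (Kt+1), (2:ℝ)^j := by rw [Finset.mul_sum]
      _ ≤ 6 * (1/2)^n * ∑ j ∈ Finset.range (Kt+1), (2:ℝ)^j := by
          apply mul_le_mul_of_nonneg_left _ hpow0
          apply Finset.sum_le_sum_of_subset_of_nonneg
          · rw [Finset.range_eq_Ico]
            exact Finset.Ico_subset_Ico (Nat.zero_le _) le_rfl
          · intros
            positivity
      _ ≤ 6 * (1/2)^n * 2^(Kt+1) := by
          apply mul_le_mul_of_nonneg_left _ hpow0
          rw [geom_sum_eq (by norm_num : (2:ℝ) ≠ 1) (Kt+1)]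
          have h2p : (0:ℝ) < 2^(Kt+1) := by positivity
          rw [show (2:ℝ) - 1 = 1 by norm_num, div_one]
          linarith
  have h2Kt1 : ((2:ℝ))^(Kt+1) ≤ 4*t := by
    have hnat : (2:ℕ)^(Kt+1) ≤ 2*(t+1) := by
      rw [pow_succ]
      omega
    have hcast : ((2:ℝ))^(Kt+1) ≤ 2*((t:ℝ)+1) := by exact_mod_cast hnat
    have h1t : (1:ℝ) ≤ t := by exact_mod_cast htpos
    linarith
  have htotal : (cnt B (Finset.range t) : ℝ) ≤ c + 24*(1/2)^n * t := by
    have m1 : cnt B (Finset.range t) ≤ cnt B (Finset.range (2^(Kt+1)-1)) := cnt_mono _ hsub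
    have m2 : (cnt B (Finset.range (2^(Kt+1)-1)) : ℝ)
        = c + ∑ j ∈ Finset.Ico K (Kt+1), (cnt B (Iiv j) : ℝ) := by
      rw [hc, cnt_range_pow B (Kt+1), hsplit]
      push_cast
      rw [cnt_range_pow B K]
      push_cast
      ring
    have m3 : 6 * (1/2:ℝ)^n * 2^(Kt+1) ≤ 6 * (1/2)^n * (4*t) :=
      mul_le_mul_of_nonneg_left h2Kt1 hpow0
    calc (cnt B (Finset.range t) : ℝ) ≤ (cnt B (Finset.range (2^(Kt+1)-1)) : ℝ) := by
          exact_mod_cast m1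
      _ = c + ∑ j ∈ Finset.Ico K (Kt+1), (cnt B (Iiv j) : ℝ) := m2
      _ ≤ c + 6 * (1/2)^n * 2^(Kt+1) := by linarith
      _ ≤ c + 6 * (1/2)^n * (4*t) := by linarith
      _ = c + 24*(1/2)^n * t := by ring
  have hdist : dist (partialDensity B t) 0 = partialDensity B t := by
    rw [Real.dist_eq, sub_zero, abs_of_nonneg (pd_nonneg _ _)]
  rw [hdist, partialDensity_eq]
  have htR : (0:ℝ) < t := by exact_mod_cast htpos
  rw [div_lt_iff₀ htR]
  have hTt : ((T:ℝ)+1) ≤ t := by exact_mod_cast ht2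
  have hcε : c < ε/2 * t := by
    rw [div_lt_iff₀ hε2] at hT
    nlinarith
  have hpowε : 24*(1/2:ℝ)^n < ε/2 := by linarith
  have hterm : 24*(1/2:ℝ)^n * t < ε/2 * t := mul_lt_mul_of_pos_right hpowε htR
  calc (cnt B (Finset.range t) : ℝ) ≤ c + 24*(1/2)^n * t := htotal
    _ < ε/2 * t + ε/2 * t := by linarith
    _ = ε * t := by ring

end CGO

theorem coarselyComputable_of_constructive_gamma_one (A : Set ℕ) (C : ℕ → ℕ → Bool)
    (hC : Computable₂ C)
    (happrox : ∀ n : ℕ, upperDensity (A ∆ {k | C n k = true}) < (1 / 2) ^ n) :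
    ∃ C' : Set ℕ, IsComputableSet C' ∧ HasDensity (A ∆ C') 0 := CGO.main A C hC happrox
end

section
/- Let A be a 1-generic set, r ∈ [0,1], and suppose B ≤_T A and B is partially computable at density r. Then B is coarsely computable at density r. -/
open Filter Topology
open scoped symmDiff Classical

/-- Codes for oracle (relative) partial computable functions. -/
inductive OracleCode : Type
  | zero : OracleCode
  | succ : OracleCode
  | left : OracleCode
  | right : OracleCode
  | oracle : OracleCode
  | pair : OracleCode → OracleCode → OracleCode
  | comp : OracleCode → OracleCode → OracleCode
  | prec : OracleCode → OracleCode → OracleCode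
  | rfind' : OracleCode → OracleCode

/-- Evaluation of an oracle code relative to a (total) oracle g : ℕ → ℕ. -/
def OracleCode.eval (g : ℕ → ℕ) : OracleCode → ℕ →. ℕ
  | .zero => fun _ => Part.some 0
  | .succ => fun n => Part.some (n + 1)
  | .left => fun n => Part.some n.unpair.1
  | .right => fun n => Part.some n.unpair.2
  | .oracle => fun n => Part.some (g n)
  | .pair cf cg => fun n => Nat.pair <$> OracleCode.eval g cf n <*> OracleCode.eval g cg n
  | .comp cf cg => fun n => OracleCode.eval g cg n >>= OracleCode.eval g cf
  | .prec cf cg =>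
    Nat.unpaired fun a n =>
      n.rec (OracleCode.eval g cf a) fun y IH => do
        let i ← IH
        OracleCode.eval g cg (Nat.pair a (Nat.pair y i))
  | .rfind' cf =>
    Nat.unpaired fun a m =>
      (Nat.rfind fun n =>
        (fun x => x = 0) <$> OracleCode.eval g cf (Nat.pair a (n + m))).map (· + m)

/-- A numerical code for oracle codes. -/
def OracleCode.encode : OracleCode → ℕ
  | .zero => 0
  | .succ => 1
  | .left => 2
  | .right => 3
  | .oracle => 4
  | .pair cf cg => 4 * Nat.pair cf.encode cg.encode + 5
  | .comp cf cg => 4 * Nat.pair cf.encode cg.encode + 6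
  | .prec cf cg => 4 * Nat.pair cf.encode cg.encode + 7
  | .rfind' cf => 4 * Nat.pair cf.encode cf.encode + 8

/-- The characteristic function of a set of naturals. -/
noncomputable def chi (A : Set ℕ) : ℕ → ℕ := fun n => if n ∈ A then 1 else 0

/-- Turing reducibility between sets of naturals. -/
def TuringReducibleSet (B A : Set ℕ) : Prop :=
  ∃ c : OracleCode, ∀ n, OracleCode.eval (chi A) c n = Part.some (chi B n)

/-- The Turing jump of a set of naturals. -/
def turingJump (A : Set ℕ) : Set ℕ :=
  {e | ∃ c : OracleCode, c.encode = e ∧ (OracleCode.eval (chi A) c e).Dom}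

/-- A set is low if its jump is Turing reducible to the jump of ∅. -/
def IsLow (A : Set ℕ) : Prop := TuringReducibleSet (turingJump A) (turingJump ∅)

/-- A (viewed as an element of 2^ω) extends the finite binary string σ. -/
def ExtendsString (A : Set ℕ) (σ : List Bool) : Prop :=
  ∀ i : ℕ, ∀ h : i < σ.length, (σ.get ⟨i, h⟩ = true ↔ i ∈ A)

/-- A meets the string set S: A extends some string in S. -/
def MeetsStrings (A : Set ℕ) (S : Set (List Bool)) : Prop := ∃ σ ∈ S, ExtendsString A σ

/-- A avoids S: A extends a string with no extension in S. -/
def AvoidsStrings (A : Set ℕ) (S : Set (List Bool)) : Prop :=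
  ∃ σ : List Bool, ExtendsString A σ ∧ ∀ τ ∈ S, ¬ σ <+: τ

/-- A is 1-generic: A meets or avoids every c.e. set of binary strings. -/
def OneGeneric (A : Set ℕ) : Prop :=
  ∀ S : Set (List Bool), REPred (· ∈ S) → MeetsStrings A S ∨ AvoidsStrings A S

namespace OGProof

/-- Evaluation of an oracle code relative to a partial oracle. -/
def evalP (O : ℕ →. ℕ) : OracleCode → ℕ →. ℕ
  | .zero => fun _ => Part.some 0
  | .succ => fun n => Part.some (n + 1)
  | .left => fun n => Part.some n.unpair.1
  | .right => fun n => Part.some n.unpair.2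
  | .oracle => fun n => O n
  | .pair cf cg => fun n => Nat.pair <$> evalP O cf n <*> evalP O cg n
  | .comp cf cg => fun n => evalP O cg n >>= evalP O cf
  | .prec cf cg =>
    Nat.unpaired fun a n =>
      n.rec (evalP O cf a) fun y IH => do
        let i ← IH
        evalP O cg (Nat.pair a (Nat.pair y i))
  | .rfind' cf =>
    Nat.unpaired fun a m =>
      (Nat.rfind fun n =>
        (fun x => x = 0) <$> evalP O cf (Nat.pair a (n + m))).map (· + m)

theorem eval_eq_evalP (g : ℕ → ℕ) (c : OracleCode) :
    OracleCode.eval g c = evalP (fun n => Part.some (g n)) c := by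
  induction c <;> simp_all [OracleCode.eval, evalP] <;> rfl

theorem evalP_mono {O O' : ℕ →. ℕ} (h : ∀ n x, x ∈ O n → x ∈ O' n) (c : OracleCode) :
    ∀ n x, x ∈ evalP O c n → x ∈ evalP O' c n := by
  induction c with
  | zero => exact fun n x hx => hx
  | succ => exact fun n x hx => hx
  | left => exact fun n x hx => hx
  | right => exact fun n x hx => hx
  | oracle => exact h
  | pair cf cg ihf ihg =>
    intro n x hx
    simp only [evalP, Seq.seq, Part.map_eq_map, Part.bind_eq_bind, Part.mem_bind_iff,
      Part.mem_map_iff] at hx ⊢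
    obtain ⟨_, ⟨a, ha, rfl⟩, b, hb, rfl⟩ := hx
    exact ⟨_, ⟨a, ihf _ _ ha, rfl⟩, b, ihg _ _ hb, rfl⟩
  | comp cf cg ihf ihg =>
    intro n x hx
    simp only [evalP, Part.bind_eq_bind, Part.mem_bind_iff] at hx ⊢
    obtain ⟨a, ha, hx⟩ := Part.mem_bind_iff.1 hx
    exact Part.mem_bind_iff.2 ⟨a, ihg _ _ ha, ihf _ _ hx⟩
  | prec cf cg ihf ihg =>
    intro n
    simp only [evalP, Nat.unpaired]
    generalize n.unpair.1 = a
    induction n.unpair.2 with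
    | zero => exact fun x hx => ihf a x hx
    | succ k ih =>
      intro x hx
      obtain ⟨i, hi, hx⟩ := Part.mem_bind_iff.1 hx
      exact Part.mem_bind_iff.2 ⟨i, ih _ hi, ihg _ _ hx⟩
  | rfind' cf ihf =>
    intro n x hx
    simp only [evalP, Nat.unpaired, Part.map_eq_map, Part.mem_map_iff, Nat.mem_rfind] at hx ⊢
    obtain ⟨k, hk, rfl⟩ := hx
    have hk' := Nat.mem_rfind.1 hk
    simp only [Part.mem_map_iff] at hk'
    obtain ⟨h1, h2⟩ := hk'
    refine ⟨k, Nat.mem_rfind.2 ⟨?_, fun {m} hm => ?_⟩, rfl⟩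
    · obtain ⟨a, ha, e⟩ := h1; exact (Part.mem_map_iff _).2 ⟨a, ihf _ _ ha, e⟩
    · obtain ⟨a, ha, e⟩ := h2 hm; exact (Part.mem_map_iff _).2 ⟨a, ihf _ _ ha, e⟩


def strOracle (σ : List Bool) : ℕ →. ℕ :=
  fun n => Part.ofOption ((σ[n]?).map fun b => cond b 1 0)

noncomputable def AStr (A : Set ℕ) (m : ℕ) : List Bool :=
  (List.range m).map fun i => decide (i ∈ A)

@[simp] theorem AStr_length (A : Set ℕ) (m : ℕ) : (AStr A m).length = m := by
  simp [AStr]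

theorem AStr_get? (A : Set ℕ) {n m : ℕ} (h : n < m) :
    (AStr A m)[n]? = some (decide (n ∈ A)) := by
  simp [AStr, h]

theorem AStr_prefix (A : Set ℕ) {m m' : ℕ} (h : m ≤ m') : AStr A m <+: AStr A m' := by
  rw [List.prefix_iff_eq_take]
  simp [AStr, ← List.map_take, List.take_range, Nat.min_eq_left h]

theorem extendsString_AStr (A : Set ℕ) (m : ℕ) : ExtendsString A (AStr A m) := by
  intro i h
  simp [AStr]

theorem extends_eq_AStr {A : Set ℕ} {σ : List Bool} (hσ : ExtendsString A σ) :
    σ = AStr A σ.length := by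
  apply List.ext_get (by simp)
  intro i h1 h2
  have h3 := hσ i h1
  have : (AStr A σ.length).get ⟨i, by simpa using h1⟩ = decide (i ∈ A) := by
    simp [AStr, List.getElem_map]
  rw [this]
  cases e : σ.get ⟨i, h1⟩ <;> simp_all

theorem strOracle_mono {σ τ : List Bool} (h : σ <+: τ) :
    ∀ n x, x ∈ strOracle σ n → x ∈ strOracle τ n := by
  intro n x hx
  simp only [strOracle, Part.mem_ofOption, Option.mem_def, Option.map_eq_some_iff] at hx ⊢
  obtain ⟨b, hb, rfl⟩ := hx
  obtain ⟨t, rfl⟩ := h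
  have hlt : n < σ.length := (List.getElem?_eq_some_iff.1 hb).1
  exact ⟨b, by rwa [List.getElem?_append_left hlt], rfl⟩

theorem strOracle_le_chi {A : Set ℕ} {σ : List Bool} (hσ : ExtendsString A σ) :
    ∀ n x, x ∈ strOracle σ n → x ∈ Part.some (chi A n) := by
  intro n x hx
  simp only [strOracle, Part.mem_ofOption, Option.mem_def, Option.map_eq_some_iff] at hx
  obtain ⟨b, hb, rfl⟩ := hx
  obtain ⟨hlt, hg⟩ := List.getElem?_eq_some_iff.1 hb
  have := hσ n hlt
  rw [List.get_eq_getElem, hg] at this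
  cases b <;> simp_all [chi]

theorem chi_mem_strOracle_AStr (A : Set ℕ) {n m : ℕ} (h : n < m) :
    chi A n ∈ strOracle (AStr A m) n := by
  simp only [strOracle, Part.mem_ofOption, Option.mem_def, Option.map_eq_some_iff]
  refine ⟨decide (n ∈ A), AStr_get? A h, ?_⟩
  by_cases hn : n ∈ A <;> simp [chi, hn]

/-- mono in the AStr length -/
theorem evalP_AStr_mono {A : Set ℕ} {m m' : ℕ} (h : m ≤ m') (c : OracleCode) :
    ∀ n x, x ∈ evalP (strOracle (AStr A m)) c n → x ∈ evalP (strOracle (AStr A m')) c n :=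
  evalP_mono (strOracle_mono (AStr_prefix A h)) c

theorem evalP_compact {A : Set ℕ} (c : OracleCode) :
    ∀ n x, x ∈ evalP (fun k => Part.some (chi A k)) c n →
      ∃ m, x ∈ evalP (strOracle (AStr A m)) c n := by
  induction c with
  | zero => exact fun n x hx => ⟨0, hx⟩
  | succ => exact fun n x hx => ⟨0, hx⟩
  | left => exact fun n x hx => ⟨0, hx⟩
  | right => exact fun n x hx => ⟨0, hx⟩
  | oracle =>
    intro n x hx
    have hx' : x = chi A n := Part.mem_some_iff.1 hx
    subst hx'
    exact ⟨n + 1, chi_mem_strOracle_AStr A (Nat.lt_succ_self n)⟩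
  | pair cf cg ihf ihg =>
    intro n x hx
    simp only [evalP, Seq.seq, Part.map_eq_map, Part.bind_eq_bind, Part.mem_bind_iff,
      Part.mem_map_iff] at hx ⊢
    obtain ⟨_, ⟨a, ha, rfl⟩, b, hb, rfl⟩ := hx
    obtain ⟨m1, ha'⟩ := ihf _ _ ha
    obtain ⟨m2, hb'⟩ := ihg _ _ hb
    exact ⟨max m1 m2, _, ⟨a, evalP_AStr_mono (le_max_left _ _) cf _ _ ha', rfl⟩,
      b, evalP_AStr_mono (le_max_right _ _) cg _ _ hb', rfl⟩
  | comp cf cg ihf ihg =>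
    intro n x hx
    simp only [evalP, Part.bind_eq_bind, Part.mem_bind_iff] at hx ⊢
    obtain ⟨a, ha, hx⟩ := Part.mem_bind_iff.1 hx
    obtain ⟨m1, ha'⟩ := ihg _ _ ha
    obtain ⟨m2, hx'⟩ := ihf _ _ hx
    exact ⟨max m1 m2, Part.mem_bind_iff.2 ⟨a, evalP_AStr_mono (le_max_left _ _) cg _ _ ha',
      evalP_AStr_mono (le_max_right _ _) cf _ _ hx'⟩⟩
  | prec cf cg ihf ihg =>
    have unf : ∀ (O : ℕ →. ℕ) a k, evalP O (.prec cf cg) (Nat.pair a (k+1)) =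
        (evalP O (.prec cf cg) (Nat.pair a k)).bind
          fun i => evalP O cg (Nat.pair a (Nat.pair k i)) := by
      intro O a k
      simp [evalP, Nat.unpaired, Nat.unpair_pair]
    have unf0 : ∀ (O : ℕ →. ℕ) a, evalP O (.prec cf cg) (Nat.pair a 0) = evalP O cf a := by
      intro O a
      simp [evalP, Nat.unpaired, Nat.unpair_pair]
    intro n x hx
    rw [← Nat.pair_unpair n] at hx ⊢
    generalize n.unpair.1 = a at *
    generalize n.unpair.2 = k at *
    clear n
    induction k generalizing x with
    | zero =>
      rw [unf0 (fun k => Part.some (chi A k))] at hx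
      simp only [unf0]
      exact ihf _ _ hx
    | succ k ih =>
      rw [unf (fun k => Part.some (chi A k))] at hx
      simp only [unf]
      obtain ⟨i, hi, hx⟩ := Part.mem_bind_iff.1 hx
      obtain ⟨m1, hi'⟩ := ih _ hi
      obtain ⟨m2, hx'⟩ := ihg _ _ hx
      refine ⟨max m1 m2, Part.mem_bind_iff.2 ⟨i, ?_, ?_⟩⟩
      · exact evalP_AStr_mono (le_max_left _ _) _ _ _ hi'
      · exact evalP_AStr_mono (le_max_right _ _) cg _ _ hx'
  | rfind' cf ihf =>
    intro n x hx
    simp only [evalP, Nat.unpaired, Part.map_eq_map, Part.mem_map_iff, Nat.mem_rfind] at hx ⊢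
    obtain ⟨k, hk, rfl⟩ := hx
    have hk' := Nat.mem_rfind.1 hk
    simp only [Part.mem_map_iff] at hk'
    obtain ⟨h1, h2⟩ := hk'
    have key : ∀ j, j ≤ k → ∃ m a, a ∈ evalP (strOracle (AStr A m)) cf
        (Nat.pair n.unpair.1 (j + n.unpair.2)) ∧ (decide (a = 0) = true ↔ j = k) := by
      intro j hj
      rcases eq_or_lt_of_le hj with rfl | hjk
      · obtain ⟨a, ha, e⟩ := h1
        obtain ⟨m, ha'⟩ := ihf _ _ ha
        exact ⟨m, a, ha', by simp [e]⟩
      · obtain ⟨a, ha, e⟩ := h2 hjk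
        obtain ⟨m, ha'⟩ := ihf _ _ ha
        exact ⟨m, a, ha', by simp [e, Nat.ne_of_lt hjk]⟩
    choose! ms as hmem hval using key
    set M := (Finset.range (k + 1)).sup ms with hM
    have hle : ∀ j, j ≤ k → ms j ≤ M :=
      fun j hj => Finset.le_sup (Finset.mem_range.2 (Nat.lt_succ_of_le hj))
    have lift : ∀ j, j ≤ k → as j ∈ evalP (strOracle (AStr A M)) cf
        (Nat.pair n.unpair.1 (j + n.unpair.2)) :=
      fun j hj => evalP_AStr_mono (hle j hj) cf _ _ (hmem j hj)
    refine ⟨M, k, Nat.mem_rfind.2 ⟨(Part.mem_map_iff _).2 ⟨as k, lift k le_rfl, (hval k le_rfl).2 rfl⟩, fun {j} hj => ?_⟩, rfl⟩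
    refine (Part.mem_map_iff _).2 ⟨as j, lift j (le_of_lt hj), ?_⟩
    rcases Bool.eq_false_or_eq_true (decide (as j = 0)) with h | h
    · exact absurd ((hval j (le_of_lt hj)).1 h) (Nat.ne_of_lt hj)
    · exact h
theorem evalP_str_partrec (c : OracleCode) :
    Partrec fun p : List Bool × ℕ => evalP (strOracle p.1) c p.2 := by
  induction c with
  | zero => exact (Computable.const 0).partrec
  | succ => exact (Computable.succ.comp Computable.snd).partrec
  | left => exact ((Computable.fst.comp Computable.unpair).comp Computable.snd).partrec
  | right => exact ((Computable.snd.comp Computable.unpair).comp Computable.snd).partrec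
  | oracle =>
    have h1 : Computable fun p : List Bool × ℕ => (p.1[p.2]?).map fun b => cond b 1 0 := by
      apply Computable.option_map
      · exact Primrec.list_getElem?.to_comp
      · exact Computable₂.mk <| Primrec.to_comp <|
          Primrec.cond Primrec.snd (Primrec.const 1) (Primrec.const 0)
    exact h1.ofOption
  | pair cf cg ihf ihg =>
    have inner : Partrec fun (pa : (List Bool × ℕ) × ℕ) =>
        (evalP (strOracle pa.1.1) cg pa.1.2).map fun b => Nat.pair pa.2 b := by
      exact Partrec.map (ihg.comp Computable.fst)
        (Primrec₂.natPair.comp (Primrec.snd.comp Primrec.fst) Primrec.snd).to_comp.to₂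
    refine (ihf.bind inner.to₂).of_eq fun p => ?_
    apply Part.ext
    intro x
    simp only [evalP, Seq.seq, Part.map_eq_map, Part.bind_eq_bind, Part.mem_bind_iff,
      Part.mem_map_iff]
    constructor
    · rintro ⟨a, ha, b, hb, rfl⟩
      exact ⟨_, ⟨a, ha, rfl⟩, b, hb, rfl⟩
    · rintro ⟨_, ⟨a, ha, rfl⟩, b, hb, rfl⟩
      exact ⟨a, ha, b, hb, rfl⟩
  | comp cf cg ihf ihg =>
    have inner : Partrec fun (pa : (List Bool × ℕ) × ℕ) =>
        evalP (strOracle pa.1.1) cf pa.2 :=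
      ihf.comp ((Computable.fst.comp Computable.fst).pair Computable.snd)
    exact (ihg.bind inner.to₂).of_eq fun p => rfl
  | prec cf cg ihf ihg =>
    have hf : Computable fun p : List Bool × ℕ => p.2.unpair.2 :=
      (Computable.snd.comp Computable.unpair).comp Computable.snd
    have hg : Partrec fun p : List Bool × ℕ => evalP (strOracle p.1) cf p.2.unpair.1 :=
      ihf.comp (Computable.fst.pair
        ((Computable.fst.comp Computable.unpair).comp Computable.snd))
    have hpair : Computable₂ fun (a b : ℕ) => Nat.pair a b := Primrec₂.natPair.to_comp
    have build : Computable fun q : (List Bool × ℕ) × ℕ × ℕ =>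
        (q.1.1, Nat.pair q.1.2.unpair.1 (Nat.pair q.2.1 q.2.2)) := by
      refine Computable.pair (Computable.fst.comp Computable.fst) ?_
      refine hpair.comp ?_ ?_
      · exact (Computable.fst.comp Computable.unpair).comp (Computable.snd.comp Computable.fst)
      · exact hpair.comp (Computable.fst.comp Computable.snd) (Computable.snd.comp Computable.snd)
    have hh : Partrec fun q : (List Bool × ℕ) × ℕ × ℕ =>
        evalP (strOracle q.1.1) cg (Nat.pair q.1.2.unpair.1 (Nat.pair q.2.1 q.2.2)) :=
      ihg.comp build
    exact (Partrec.nat_rec hf hg hh.to₂).of_eq fun p => rfl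
  | rfind' cf ihf =>
    have hpair : Computable₂ fun (a b : ℕ) => Nat.pair a b := Primrec₂.natPair.to_comp
    have hadd : Computable₂ fun (a b : ℕ) => a + b := Primrec.nat_add.to_comp
    have build : Computable fun q : (List Bool × ℕ) × ℕ =>
        (q.1.1, Nat.pair q.1.2.unpair.1 (q.2 + q.1.2.unpair.2)) := by
      refine Computable.pair (Computable.fst.comp Computable.fst) ?_
      refine hpair.comp ((Computable.fst.comp Computable.unpair).comp
        (Computable.snd.comp Computable.fst)) ?_
      exact hadd.comp Computable.snd
        ((Computable.snd.comp Computable.unpair).comp (Computable.snd.comp Computable.fst))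
    have hdec : Computable₂ fun (_ : (List Bool × ℕ) × ℕ) (x : ℕ) => decide (x = 0) := by
      have h0 : Primrec fun x : ℕ => decide (x = 0) :=
        (Primrec.eq.comp Primrec.id (Primrec.const 0)).decide
      exact (h0.comp Primrec.snd).to_comp
    have hq : Partrec₂ fun (p : List Bool × ℕ) (k : ℕ) =>
        ((fun x => decide (x = 0)) <$> evalP (strOracle p.1) cf
          (Nat.pair p.2.unpair.1 (k + p.2.unpair.2))) :=
      ((ihf.comp build).map hdec).to₂
    have hout : Computable₂ fun (p : List Bool × ℕ) (k : ℕ) => k + p.2.unpair.2 :=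
      hadd.comp Computable.snd
        ((Computable.snd.comp Computable.unpair).comp (Computable.snd.comp Computable.fst))
    exact ((Partrec.rfind hq).map hout).of_eq fun p => rfl

def Gtest (c : OracleCode) (φ : ℕ →. Bool) : List Bool × ℕ →. Unit := fun p =>
  (evalP (strOracle p.1) c p.2).bind fun x => (φ p.2).bind fun b =>
    Part.assert (x ≠ cond b 1 0) fun _ => Part.some ()

theorem Gtest_dom_iff {c : OracleCode} {φ : ℕ →. Bool} {σ : List Bool} {n : ℕ} :
    (Gtest c φ (σ, n)).Dom ↔
      ∃ x ∈ evalP (strOracle σ) c n, ∃ b ∈ φ n, x ≠ cond b 1 0 := by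
  rw [Part.dom_iff_mem]
  constructor
  · rintro ⟨u, hu⟩
    simp only [Gtest, Part.mem_bind_iff, Part.mem_assert_iff] at hu
    obtain ⟨x, hx, b, hb, h, -⟩ := hu
    exact ⟨x, hx, b, hb, h⟩
  · rintro ⟨x, hx, b, hb, h⟩
    refine ⟨(), ?_⟩
    simp only [Gtest, Part.mem_bind_iff, Part.mem_assert_iff]
    exact ⟨x, hx, b, hb, h, Part.mem_some ()⟩

theorem Gtest_partrec (c : OracleCode) {φ : ℕ →. Bool} (hφ : Partrec φ) :
    Partrec (Gtest c φ) := by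
  have h1 : Partrec fun q : (List Bool × ℕ) × ℕ => φ q.1.2 :=
    hφ.comp (Computable.snd.comp Computable.fst)
  have hassert : Computable fun q : ((List Bool × ℕ) × ℕ) × Bool =>
      (if q.1.2 = cond q.2 1 0 then (none : Option Unit) else some ()) := by
    apply Primrec.to_comp
    apply Primrec.ite
    · exact Primrec.eq.comp (Primrec.snd.comp Primrec.fst)
        (Primrec.cond Primrec.snd (Primrec.const 1) (Primrec.const 0))
    · exact Primrec.const none
    · exact Primrec.const (some ())
  have h2 : Partrec fun q : ((List Bool × ℕ) × ℕ) × Bool =>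
      (Part.assert (q.1.2 ≠ cond q.2 1 0) fun _ => Part.some ()) := by
    apply hassert.ofOption.of_eq
    intro q
    by_cases h : q.1.2 = cond q.2 1 0 <;> simp [h, Part.assert_pos, Part.assert_neg]
  exact ((evalP_str_partrec c).bind ((h1.bind h2.to₂).to₂)).of_eq fun p => rfl

def Sset (c : OracleCode) (φ : ℕ →. Bool) : Set (List Bool) :=
  {σ | ∃ n, (Gtest c φ (σ, n)).Dom}

theorem Sset_re (c : OracleCode) {φ : ℕ →. Bool} (hφ : Partrec φ) :
    REPred (· ∈ Sset c φ) := by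
  have hN : Nat.Partrec fun m => Part.bind (Encodable.decode (α := List Bool × ℕ) m)
      fun p => (Gtest c φ p).map Encodable.encode := Gtest_partrec c hφ
  obtain ⟨e, he⟩ := Nat.Partrec.Code.exists_code.1 hN
  have hdom : ∀ (σ : List Bool) (n : ℕ), (Gtest c φ (σ, n)).Dom ↔
      (Nat.Partrec.Code.eval e (Encodable.encode ((σ, n) : List Bool × ℕ))).Dom := by
    intro σ n
    rw [he]
    simp [Encodable.encodek]
  have htest : Computable₂ fun (σ : List Bool) (k : ℕ) =>
      (Nat.Partrec.Code.evaln k.unpair.2 e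
        (Encodable.encode ((σ, k.unpair.1) : List Bool × ℕ))).isSome := by
    apply Primrec.to_comp
    have hbuild : Primrec fun q : List Bool × ℕ =>
        (((q.2.unpair.2, e) : ℕ × Nat.Partrec.Code),
          Encodable.encode ((q.1, q.2.unpair.1) : List Bool × ℕ)) := by
      refine Primrec.pair (Primrec.pair ?_ (Primrec.const e)) ?_
      · exact (Primrec.snd.comp Primrec.unpair).comp Primrec.snd
      · exact Primrec.encode.comp (Primrec.pair Primrec.fst
          ((Primrec.fst.comp Primrec.unpair).comp Primrec.snd))
    exact Primrec.option_isSome.comp (Nat.Partrec.Code.primrec_evaln.comp hbuild)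
  have hF : Partrec fun σ : List Bool => Nat.rfind fun k =>
      (Part.some ((Nat.Partrec.Code.evaln k.unpair.2 e
        (Encodable.encode ((σ, k.unpair.1) : List Bool × ℕ))).isSome) : Part Bool) :=
    Partrec.rfind htest.partrec₂
  apply hF.dom_re.of_eq
  intro σ
  refine Nat.rfind_dom.trans ?_
  constructor
  · rintro ⟨k, htrue, -⟩
    rw [Part.mem_some_iff] at htrue
    obtain ⟨v, hv⟩ := Option.isSome_iff_exists.1 htrue.symm
    have := Nat.Partrec.Code.evaln_sound (Option.mem_def.2 hv)
    exact ⟨k.unpair.1, (hdom σ k.unpair.1).2 (Part.dom_iff_mem.2 ⟨_, this⟩)⟩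
  · rintro ⟨n, hn⟩
    obtain ⟨v, hv⟩ := Part.dom_iff_mem.1 ((hdom σ n).1 hn)
    obtain ⟨s, hs⟩ := Nat.Partrec.Code.evaln_complete.1 hv
    refine ⟨Nat.pair n s, ?_, fun {m} _ => trivial⟩
    rw [Part.mem_some_iff]
    simp only [Nat.unpair_pair]
    exact (Option.isSome_iff_exists.2 ⟨v, hs⟩).symm

theorem cond_eq_chi {B : Set ℕ} {n : ℕ} {b : Bool} (h : b = true ↔ n ∈ B) :
    cond b 1 0 = chi B n := by
  by_cases hn : n ∈ B <;> cases b <;> simp_all [chi]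

theorem exists_g (c : OracleCode) (σ₀ : List Bool)
    (htot : ∀ n : ℕ, ∃ τ, σ₀ <+: τ ∧ (evalP (strOracle τ) c n).Dom) :
    ∃ g : ℕ → ℕ, Computable g ∧ ∀ n, ∃ τ, σ₀ <+: τ ∧ g n ∈ evalP (strOracle τ) c n := by
  have hN : Nat.Partrec fun m => Part.bind (Encodable.decode (α := List Bool × ℕ) m)
      fun p : List Bool × ℕ => (evalP (strOracle p.1) c p.2).map Encodable.encode :=
    evalP_str_partrec c
  obtain ⟨e, he⟩ := Nat.Partrec.Code.exists_code.1 hN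
  have hev : ∀ (τ : List Bool) (n x : ℕ), x ∈ evalP (strOracle τ) c n ↔
      x ∈ Nat.Partrec.Code.eval e (Encodable.encode ((τ, n) : List Bool × ℕ)) := by
    intro τ n x
    rw [he]
    simp [Encodable.encodek, Encodable.encode_nat]
  set test : ℕ → ℕ → Bool := fun n k =>
    ((Encodable.decode (α := List Bool) k.unpair.1).map fun ext =>
      (Nat.Partrec.Code.evaln k.unpair.2 e
        (Encodable.encode ((σ₀ ++ ext, n) : List Bool × ℕ))).isSome).getD false with htestdef
  set extract : ℕ → ℕ → ℕ := fun n k =>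
    ((Encodable.decode (α := List Bool) k.unpair.1).bind fun ext =>
      Nat.Partrec.Code.evaln k.unpair.2 e
        (Encodable.encode ((σ₀ ++ ext, n) : List Bool × ℕ))).getD 0 with hextractdef
  have hbuild : Primrec fun q : (ℕ × ℕ) × List Bool =>
      (((q.1.2.unpair.2, e) : ℕ × Nat.Partrec.Code),
        Encodable.encode ((σ₀ ++ q.2, q.1.1) : List Bool × ℕ)) := by
    refine Primrec.pair (Primrec.pair ?_ (Primrec.const e)) ?_
    · exact (Primrec.snd.comp Primrec.unpair).comp (Primrec.snd.comp Primrec.fst)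
    · exact Primrec.encode.comp (Primrec.pair
        (Primrec.list_append.comp (Primrec.const σ₀) Primrec.snd)
        (Primrec.fst.comp Primrec.fst))
  have hevn : Primrec fun q : (ℕ × ℕ) × List Bool =>
      Nat.Partrec.Code.evaln q.1.2.unpair.2 e
        (Encodable.encode ((σ₀ ++ q.2, q.1.1) : List Bool × ℕ)) :=
    Nat.Partrec.Code.primrec_evaln.comp hbuild
  have hdecodek : Primrec fun p : ℕ × ℕ => Encodable.decode (α := List Bool) p.2.unpair.1 :=
    Primrec.decode.comp ((Primrec.fst.comp Primrec.unpair).comp Primrec.snd)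
  have htestc : Computable₂ test := by
    apply Primrec.to_comp
    exact Primrec₂.mk <| Primrec.option_getD.comp
      (Primrec.option_map hdecodek (Primrec.option_isSome.comp hevn).to₂)
      (Primrec.const false)
  have hextractc : Computable₂ extract := by
    apply Primrec.to_comp
    exact Primrec₂.mk <| Primrec.option_getD.comp
      (Primrec.option_bind hdecodek hevn.to₂) (Primrec.const 0)
  set Cfun : ℕ →. ℕ := fun n => (Nat.rfind fun k => Part.some (test n k)).map (extract n)
    with hCfundef
  have hCpr : Partrec Cfun := (Partrec.rfind htestc.partrec₂).map hextractc
  have hdomC : ∀ n, (Cfun n).Dom := by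
    intro n
    obtain ⟨τ, hpre, hdom⟩ := htot n
    obtain ⟨ext, rfl⟩ := hpre
    obtain ⟨x, hx⟩ := Part.dom_iff_mem.1 hdom
    obtain ⟨s, hs⟩ := Nat.Partrec.Code.evaln_complete.1 ((hev _ n x).1 hx)
    have htt : test n (Nat.pair (Encodable.encode ext) s) = true := by
      simp [htestdef, Nat.unpair_pair, Encodable.encodek, Option.isSome_iff_exists]
      exact ⟨x, hs⟩
    have h1 : (Nat.rfind fun k => Part.some (test n k)).Dom :=
      Nat.rfind_dom.2 ⟨Nat.pair (Encodable.encode ext) s, by simp [htt], fun {m} _ => trivial⟩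
    exact Part.dom_iff_mem.2 ⟨_, Part.mem_map _ (Part.get_mem h1)⟩
  refine ⟨fun n => (Cfun n).get (hdomC n), Partrec.of_eq_tot hCpr
    (fun n => Part.get_mem _), ?_⟩
  intro n
  show ∃ τ, σ₀ <+: τ ∧ (Cfun n).get (hdomC n) ∈ evalP (strOracle τ) c n
  have hg : (Cfun n).get (hdomC n) ∈ Cfun n := Part.get_mem _
  simp only [hCfundef, Part.mem_map_iff] at hg
  obtain ⟨k, hk, hex⟩ := hg
  have htt : test n k = true := by
    have := Nat.rfind_spec hk
    rwa [Part.mem_some_iff, eq_comm] at this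
  rcases hdec : Encodable.decode (α := List Bool) k.unpair.1 with _ | ext
  · rw [htestdef] at htt
    simp only [hdec, Option.map_none, Option.getD_none] at htt
    exact absurd htt (by simp)
  · rw [htestdef] at htt
    simp only [hdec, Option.map_some, Option.getD_some] at htt
    obtain ⟨v, hv⟩ := Option.isSome_iff_exists.1 htt
    have hvm := Nat.Partrec.Code.evaln_sound (Option.mem_def.2 hv)
    refine ⟨σ₀ ++ ext, List.prefix_append σ₀ ext, ?_⟩
    have hval : extract n k = v := by
      rw [hextractdef]
      simp only [hdec, Option.bind_some]
      rw [hv]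
      rfl
    have hgm : extract n k ∈ Cfun n := by
      rw [hCfundef]
      exact Part.mem_map _ hk
    have hgeq : (Cfun n).get (hdomC n) = extract n k := Part.get_eq_of_mem hgm _
    rw [hgeq, hval]
    exact (hev _ n v).2 hvm

theorem partialDensity_nonneg (D : Set ℕ) (n : ℕ) : 0 ≤ partialDensity D n :=
  div_nonneg (by positivity) (by positivity)

theorem partialDensity_le_one (D : Set ℕ) (n : ℕ) : partialDensity D n ≤ 1 := by
  rcases Nat.eq_zero_or_pos n with rfl | hn
  · simp [partialDensity]
  · rw [partialDensity, div_le_one (by exact_mod_cast hn)]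
    exact_mod_cast (Finset.card_filter_le _ _).trans_eq (Finset.card_range n)

theorem partialDensity_mono {D E : Set ℕ} (h : D ⊆ E) (n : ℕ) :
    partialDensity D n ≤ partialDensity E n := by
  rcases Nat.eq_zero_or_pos n with rfl | hn
  · simp [partialDensity]
  · unfold partialDensity
    gcongr

theorem lowerDensity_mono {D E : Set ℕ} (h : D ⊆ E) : lowerDensity D ≤ lowerDensity E := by
  apply Filter.liminf_le_liminf
  · exact Filter.Eventually.of_forall (partialDensity_mono h)
  · exact Filter.isBoundedUnder_of ⟨0, fun n => partialDensity_nonneg D n⟩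
  · exact Filter.IsBoundedUnder.isCoboundedUnder_ge
      (Filter.isBoundedUnder_of ⟨1, fun n => partialDensity_le_one E n⟩)

end OGProof

theorem coarse_from_partial_below_one_generic (A B : Set ℕ) (r : ℝ)
    (hr0 : 0 ≤ r) (hr1 : r ≤ 1) (hA : OneGeneric A) (hBA : TuringReducibleSet B A)
    (hB : PartiallyComputableAt B r) : CoarselyComputableAt B r := by
  obtain ⟨c, hc⟩ := hBA
  obtain ⟨φ, hφpr, hφag, hφdens⟩ := hB
  have hceval : ∀ n, OGProof.evalP (fun k => Part.some (chi A k)) c n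
      = Part.some (chi B n) := by
    intro n
    rw [← OGProof.eval_eq_evalP]
    exact hc n
  have hnomeet : ∀ σ, ExtendsString A σ → σ ∉ OGProof.Sset c φ := by
    intro σ hext hσS
    obtain ⟨n, hn⟩ := hσS
    obtain ⟨x, hx, b, hb, hne⟩ := OGProof.Gtest_dom_iff.1 hn
    have hx' : x ∈ OGProof.evalP (fun k => Part.some (chi A k)) c n :=
      OGProof.evalP_mono (OGProof.strOracle_le_chi hext) c n x hx
    rw [hceval n, Part.mem_some_iff] at hx'
    exact hne (hx'.trans (OGProof.cond_eq_chi (hφag n b hb)).symm)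
  rcases hA (OGProof.Sset c φ) (OGProof.Sset_re c hφpr) with hmeet | havoid
  · obtain ⟨σ, hσS, hext⟩ := hmeet
    exact absurd hσS (hnomeet σ hext)
  obtain ⟨σ₀, hext₀, hav⟩ := havoid
  have htot : ∀ n : ℕ, ∃ τ, σ₀ <+: τ ∧ (OGProof.evalP (OGProof.strOracle τ) c n).Dom := by
    intro n
    have hmem : chi B n ∈ OGProof.evalP (fun k => Part.some (chi A k)) c n := by
      rw [hceval n]
      exact Part.mem_some _
    obtain ⟨m, hm⟩ := OGProof.evalP_compact c n _ hmem
    refine ⟨OGProof.AStr A (max m σ₀.length), ?_, ?_⟩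
    · have h2 := OGProof.AStr_prefix A (le_max_right m σ₀.length)
      rwa [← OGProof.extends_eq_AStr hext₀] at h2
    · exact Part.dom_iff_mem.2 ⟨_, OGProof.evalP_AStr_mono (le_max_left _ _) c n _ hm⟩
  obtain ⟨g, hgcomp, hgspec⟩ := OGProof.exists_g c σ₀ htot
  refine ⟨{n | g n = 1}, ?_, ?_⟩
  · rw [IsComputableSet, ComputablePred.computable_iff]
    refine ⟨fun n => decide (g n = 1), ?_, ?_⟩
    · exact (Primrec.eq.comp Primrec.id (Primrec.const 1)).decide.to_comp.comp hgcomp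
    · funext n
      simp [Set.mem_setOf_eq]
  · refine le_trans hφdens (OGProof.lowerDensity_mono ?_)
    intro n hn
    have hdom : (φ n).Dom := hn
    have hb : (φ n).get hdom ∈ φ n := Part.get_mem _
    set b := (φ n).get hdom with hbdef
    obtain ⟨τ, hpre, hgm⟩ := hgspec n
    have hτS : τ ∉ OGProof.Sset c φ := fun hS => hav τ hS hpre
    have hgval : g n = cond b 1 0 := by
      by_contra hne
      exact hτS ⟨n, OGProof.Gtest_dom_iff.2 ⟨g n, hgm, b, hb, hne⟩⟩
    have hchib : g n = chi B n := hgval.trans (OGProof.cond_eq_chi (hφag n b hb))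
    show n ∈ B ↔ n ∈ {n | g n = 1}
    simp only [Set.mem_setOf_eq, hchib]
    by_cases hnB : n ∈ B <;> simp [chi, hnB]
end

section
/- For any set A ⊆ ℕ and any s ∈ (0,1] such that there is a computable set R of density s: if h is an increasing computable function with range R and B = h(A), then for every t ∈ [0,1], A is coarsely computable at density t if and only if B is coarsely computable at density s·t + (1 − s). Consequently γ(B) = s·γ(A) + (1 − s). -/
open Filter Topology
open scoped symmDiff Classical

/-! ### Auxiliary material -/

namespace CoarseScaling

/-- Counting function. -/
noncomputable def cnt (A : Set ℕ) (n : ℕ) : ℕ :=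
  ((Finset.range n).filter (fun k => k ∈ A)).card

lemma pd_eq (A : Set ℕ) (n : ℕ) : partialDensity A n = (cnt A n : ℝ) / n := rfl

lemma cnt_le (A : Set ℕ) (n : ℕ) : cnt A n ≤ n := by
  simpa [cnt] using Finset.card_filter_le (Finset.range n) (fun k => k ∈ A)

lemma cnt_mono_set {A B : Set ℕ} (hAB : A ⊆ B) (n : ℕ) : cnt A n ≤ cnt B n := by
  apply Finset.card_le_card
  exact Finset.monotone_filter_right _ (fun x _ hx => hAB hx)

lemma pd_nonneg (A : Set ℕ) (n : ℕ) : 0 ≤ partialDensity A n := by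
  rw [pd_eq]; positivity

lemma pd_le_one (A : Set ℕ) (n : ℕ) : partialDensity A n ≤ 1 := by
  rcases Nat.eq_zero_or_pos n with rfl | hn
  · simp [pd_eq]
  · rw [pd_eq, div_le_one (by exact_mod_cast hn)]
    exact_mod_cast cnt_le A n

lemma bddLe (A : Set ℕ) : IsBoundedUnder (· ≤ ·) atTop (partialDensity A) :=
  isBoundedUnder_of ⟨1, fun n => pd_le_one A n⟩

lemma bddGe (A : Set ℕ) : IsBoundedUnder (· ≥ ·) atTop (partialDensity A) :=
  isBoundedUnder_of ⟨0, fun n => pd_nonneg A n⟩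

lemma lowerDensity_nonneg (A : Set ℕ) : 0 ≤ lowerDensity A :=
  le_liminf_of_le (bddLe A).isCoboundedUnder_ge (Eventually.of_forall (pd_nonneg A))

lemma lowerDensity_le_one (A : Set ℕ) : lowerDensity A ≤ 1 :=
  liminf_le_of_frequently_le (Frequently.of_forall (pd_le_one A)) (bddGe A)

lemma isComputableSet_empty : IsComputableSet (∅ : Set ℕ) := by
  rw [IsComputableSet, ComputablePred.computable_iff]
  exact ⟨fun _ => false, Computable.const false, by funext n; simp⟩

lemma ccAt_zero (A : Set ℕ) : CoarselyComputableAt A 0 :=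
  ⟨∅, isComputableSet_empty, lowerDensity_nonneg _⟩

lemma ccAt_le_one {A : Set ℕ} {r : ℝ} (h : CoarselyComputableAt A r) : r ≤ 1 := by
  obtain ⟨C, _, hd⟩ := h
  exact hd.trans (lowerDensity_le_one _)

lemma isComputableSet_preimage {C : Set ℕ} {h : ℕ → ℕ} (hcomp : Computable h)
    (hC : IsComputableSet C) : IsComputableSet {k | h k ∈ C} := by
  obtain ⟨f, hf, hfeq⟩ := ComputablePred.computable_iff.1 hC
  refine ComputablePred.computable_iff.2 ⟨fun k => f (h k), hf.comp hcomp, ?_⟩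
  funext k
  exact congrFun hfeq (h k)

lemma isComputableSet_image {C : Set ℕ} {h : ℕ → ℕ} (hmono : StrictMono h)
    (hcomp : Computable h) (hC : IsComputableSet C) : IsComputableSet (h '' C) := by
  obtain ⟨f, hf, hfeq⟩ := ComputablePred.computable_iff.1 hC
  set g : ℕ → Bool := fun n => Nat.rec false (fun k ih => ih || ((h k == n) && f k)) (n + 1)
    with hg
  have hmem : ∀ k, k ∈ C ↔ f k = true := by
    intro k
    exact iff_of_eq (congrFun hfeq k)
  have hgc : Computable g := by
    have c1 : Computable fun p : ℕ × (ℕ × Bool) => p.2.2 :=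
      Computable.snd.comp Computable.snd
    have c2 : Computable fun p : ℕ × (ℕ × Bool) => (h p.2.1 == p.1) :=
      (Primrec.beq.to_comp).comp (hcomp.comp (Computable.fst.comp Computable.snd)) Computable.fst
    have c3 : Computable fun p : ℕ × (ℕ × Bool) => f p.2.1 :=
      hf.comp (Computable.fst.comp Computable.snd)
    have inner : Computable fun p : ℕ × (ℕ × Bool) => ((h p.2.1 == p.1) && f p.2.1) := by
      have := Computable.cond c2 c3 (Computable.const false)
      exact this.of_eq fun p => by cases hb : (h p.2.1 == p.1) <;> simp [hb]
    have H : Computable₂ fun (n : ℕ) (p : ℕ × Bool) => p.2 || ((h p.1 == n) && f p.1) := by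
      have := Computable.cond c1 (Computable.const true) inner
      exact Computable₂.mk (this.of_eq fun p => by cases hb : p.2.2 <;> simp [hb])
    have := Computable.nat_rec (f := fun n : ℕ => n + 1) (g := fun _ : ℕ => false)
      (h := fun (n : ℕ) (p : ℕ × Bool) => p.2 || ((h p.1 == n) && f p.1))
      (Computable.succ) (Computable.const false) H
    exact this.of_eq fun n => rfl
  have hrec : ∀ (j n : ℕ),
      (Nat.rec false (fun k ih => ih || ((h k == n) && f k)) j : Bool) = true
        ↔ ∃ k, k < j ∧ h k = n ∧ f k = true := by
    intro j n
    induction j with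
    | zero => simp
    | succ j ih =>
      simp only [Bool.or_eq_true, Bool.and_eq_true, beq_iff_eq, ih]
      constructor
      · rintro (⟨k, hk, hkn, hfk⟩ | ⟨hn, hfj⟩)
        · exact ⟨k, by omega, hkn, hfk⟩
        · exact ⟨j, by omega, hn, hfj⟩
      · rintro ⟨k, hk, hkn, hfk⟩
        rcases Nat.lt_or_ge k j with hkj | hkj
        · exact Or.inl ⟨k, hkj, hkn, hfk⟩
        · have : k = j := by omega
          subst this
          exact Or.inr ⟨hkn, hfk⟩
  refine ComputablePred.computable_iff.2 ⟨g, hgc, ?_⟩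
  funext n
  show (n ∈ h '' C) = (g n = true)
  rw [hg]
  simp only []
  rw [hrec (n + 1) n]
  apply propext
  constructor
  · rintro ⟨k, hkC, rfl⟩
    exact ⟨k, by have := hmono.le_apply (x := k); omega, rfl, (hmem k).1 hkC⟩
  · rintro ⟨k, _, rfl, hfk⟩
    exact ⟨k, (hmem k).2 hfk, rfl⟩

/-- liminf along a monotone surjective-onto-tails reparametrization. -/
lemma map_atTop_eq (m : ℕ → ℕ) (hm : Monotone m) (htop : Tendsto m atTop atTop)
    (hsurj : ∀ j, ∃ k, m k = j) : Filter.map m atTop = atTop := by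
  apply le_antisymm htop
  rw [Filter.le_def]
  intro S hS
  rw [Filter.mem_map, mem_atTop_sets] at hS
  obtain ⟨N, hN⟩ := hS
  rw [mem_atTop_sets]
  refine ⟨m N, fun j hj => ?_⟩
  obtain ⟨k, rfl⟩ := hsurj j
  by_cases hk : N ≤ k
  · exact hN k hk
  · have h1 : m k ≤ m N := hm (le_of_not_ge hk)
    have h2 : m k = m N := le_antisymm h1 hj
    rw [h2]
    exact hN N le_rfl

lemma liminf_comp_of_map (f : ℕ → ℝ) {m : ℕ → ℕ} (hmap : Filter.map m atTop = atTop) :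
    liminf (fun n => f (m n)) atTop = liminf f atTop := by
  rw [liminf_eq, liminf_eq]
  congr 1
  ext a
  have h2 : (∀ᶠ b in atTop, a ≤ f b) ↔ (∀ᶠ b in Filter.map m atTop, a ≤ f b) := by
    rw [hmap]
  simp only [Set.mem_setOf_eq, h2, eventually_map]

/-- The key liminf computation: `liminf (w·g + (1−w)) = s·liminf g + (1−s)` when `w → s`. -/
lemma liminf_affine {w g : ℕ → ℝ} {s : ℝ}
    (hw : Tendsto w atTop (𝓝 s)) (hw0 : ∀ n, 0 ≤ w n) (hw1 : ∀ n, w n ≤ 1)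
    (hg0 : ∀ n, 0 ≤ g n) (hg1 : ∀ n, g n ≤ 1) :
    liminf (fun n => w n * g n + (1 - w n)) atTop = s * liminf g atTop + (1 - s) := by
  have hbw_le : IsBoundedUnder (· ≤ ·) atTop w := isBoundedUnder_of ⟨1, hw1⟩
  have hbg_le : IsBoundedUnder (· ≤ ·) atTop g := isBoundedUnder_of ⟨1, hg1⟩
  have hmul : liminf (w * g) atTop = s * liminf g atTop := by
    apply le_antisymm
    · have := liminf_mul_le (f := atTop) (u := w) (v := g)
        (Eventually.of_forall hw0) hbw_le (Eventually.of_forall hg0)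
        hbg_le.isCoboundedUnder_ge
      rwa [hw.limsup_eq] at this
    · have := le_liminf_mul (f := atTop) (u := w) (v := g)
        (Eventually.of_forall hw0) hbw_le (Eventually.of_forall hg0)
        hbg_le.isCoboundedUnder_ge
      rwa [hw.liminf_eq] at this
  have hbwg_le : IsBoundedUnder (· ≤ ·) atTop (w * g) :=
    isBoundedUnder_of ⟨1, fun n => by
      have := hw0 n; have := hw1 n; have := hg0 n; have := hg1 n
      simp only [Pi.mul_apply]; nlinarith⟩
  have hbwg_ge : IsBoundedUnder (· ≥ ·) atTop (w * g) :=
    isBoundedUnder_of ⟨0, fun n => by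
      simp only [Pi.mul_apply]; exact mul_nonneg (hw0 n) (hg0 n)⟩
  have hy : Tendsto (fun n => 1 - w n) atTop (𝓝 (1 - s)) := tendsto_const_nhds.sub hw
  have key : liminf ((fun n => 1 - w n) + (w * g)) atTop = (1 - s) + liminf (w * g) atTop := by
    apply le_antisymm
    · have := liminf_add_le (f := atTop) (u := fun n => 1 - w n) (v := w * g)
        hy.isBoundedUnder_ge hy.isBoundedUnder_le hbwg_ge hbwg_le.isCoboundedUnder_ge
      rwa [hy.limsup_eq] at this
    · have := le_liminf_add (f := atTop) (u := fun n => 1 - w n) (v := w * g)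
        hy.isBoundedUnder_ge hy.isBoundedUnder_le hbwg_ge hbwg_le.isCoboundedUnder_ge
      rwa [hy.liminf_eq] at this
  calc liminf (fun n => w n * g n + (1 - w n)) atTop
      = liminf ((fun n => 1 - w n) + (w * g)) atTop := by
        congr 1; funext n; simp only [Pi.add_apply, Pi.mul_apply]; ring
    _ = (1 - s) + (s * liminf g atTop) := by rw [key, hmul]
    _ = s * liminf g atTop + (1 - s) := by ring

lemma cnt_union {U V : Set ℕ} (hd : Disjoint U V) (n : ℕ) :
    cnt (U ∪ V) n = cnt U n + cnt V n := by
  have hdisj : Disjoint ((Finset.range n).filter (fun k => k ∈ U))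
      ((Finset.range n).filter (fun k => k ∈ V)) := by
    rw [Finset.disjoint_left]
    intro a haU haV
    rw [Finset.mem_filter] at haU haV
    exact Set.disjoint_left.1 hd haU.2 haV.2
  unfold cnt
  rw [← Finset.card_union_of_disjoint hdisj]
  congr 1
  ext j
  simp [Finset.mem_filter, and_or_left]

section StrictMonoEnum

variable {h : ℕ → ℕ} {R : Set ℕ}

lemma hk_lt_iff (hmono : StrictMono h) (hrange : Set.range h = R) (n k : ℕ) :
    h k < n ↔ k < cnt R n := by
  have hex : ∃ j, n ≤ h j := ⟨n, hmono.le_apply⟩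
  set m' := Nat.find hex with hm'
  have h1 : ∀ j, h j < n ↔ j < m' := by
    intro j
    constructor
    · intro hj
      by_contra hle
      push_neg at hle
      exact absurd ((Nat.find_spec hex).trans (hmono.monotone hle)) (not_le.2 hj)
    · intro hj
      have := Nat.find_min hex hj
      omega
  have hcard : cnt R n = m' := by
    have himg : (Finset.range n).filter (fun j => j ∈ R) = (Finset.range m').image h := by
      ext j
      simp only [Finset.mem_filter, Finset.mem_range, Finset.mem_image]
      constructor
      · rintro ⟨hjn, hjR⟩
        rw [← hrange] at hjR
        obtain ⟨k', rfl⟩ := hjR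
        exact ⟨k', (h1 k').1 hjn, rfl⟩
      · rintro ⟨k', hk', rfl⟩
        exact ⟨(h1 k').2 hk', hrange ▸ Set.mem_range_self k'⟩
    rw [cnt, himg, Finset.card_image_of_injective _ hmono.injective, Finset.card_range]
  rw [hcard]
  exact h1 k

lemma cnt_image (hmono : StrictMono h) (hrange : Set.range h = R) (E : Set ℕ) (n : ℕ) :
    cnt (h '' E) n = cnt E (cnt R n) := by
  have himg : (Finset.range n).filter (fun j => j ∈ h '' E)
      = ((Finset.range (cnt R n)).filter (fun k => k ∈ E)).image h := by
    ext j
    simp only [Finset.mem_filter, Finset.mem_range, Finset.mem_image]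
    constructor
    · rintro ⟨hjn, k', hk'E, rfl⟩
      exact ⟨k', ⟨(hk_lt_iff hmono hrange n k').1 hjn, hk'E⟩, rfl⟩
    · rintro ⟨k', ⟨hk', hk'E⟩, rfl⟩
      exact ⟨(hk_lt_iff hmono hrange n k').2 hk', k', hk'E, rfl⟩
  rw [cnt, himg, Finset.card_image_of_injective _ hmono.injective]
  rfl

lemma pd_image (hmono : StrictMono h) (hrange : Set.range h = R) (E : Set ℕ) (n : ℕ) :
    partialDensity (h '' E) n = partialDensity R n * partialDensity E (cnt R n) := by
  rw [pd_eq, pd_eq, pd_eq, cnt_image hmono hrange]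
  rcases Nat.eq_zero_or_pos (cnt R n) with hm | hm
  · rw [hm]; simp [cnt]
  · have hn : (0:ℝ) < n := by
      have := (cnt_le R n)
      have : 0 < n := lt_of_lt_of_le hm this
      exact_mod_cast this
    have hmR : ((cnt R n : ℝ)) ≠ 0 := by exact_mod_cast hm.ne'
    field_simp

lemma cnt_R_monotone : Monotone (cnt R) := fun a b hab =>
  Finset.card_le_card (Finset.filter_subset_filter _ (Finset.range_subset_range.2 hab))

lemma cnt_R_tendsto (hmono : StrictMono h) (hrange : Set.range h = R) :
    Tendsto (cnt R) atTop atTop := by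
  apply tendsto_atTop_atTop.2
  intro b
  refine ⟨h b + 1, fun n hn => ?_⟩
  have : h b < n := by omega
  exact le_of_lt ((hk_lt_iff hmono hrange n b).1 this)

lemma cnt_R_apply_h (hmono : StrictMono h) (hrange : Set.range h = R) (k : ℕ) :
    cnt R (h k) = k := by
  have h1 : ∀ j, j < cnt R (h k) ↔ j < k := by
    intro j
    rw [← hk_lt_iff hmono hrange (h k) j, hmono.lt_iff_lt]
  by_contra hne
  rcases Nat.lt_or_ge (cnt R (h k)) k with hlt | hge
  · exact absurd ((h1 _).2 hlt) (lt_irrefl _)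
  · have : cnt R (h k) ≠ k := hne
    have hklt : k < cnt R (h k) := lt_of_le_of_ne hge (Ne.symm this)
    exact absurd ((h1 _).1 hklt) (lt_irrefl _)

lemma map_cntR (hmono : StrictMono h) (hrange : Set.range h = R) :
    Filter.map (cnt R) atTop = atTop :=
  map_atTop_eq _ cnt_R_monotone (cnt_R_tendsto hmono hrange)
    (fun j => ⟨h j, cnt_R_apply_h hmono hrange j⟩)

lemma pd_compl (n : ℕ) (hn : 0 < n) :
    partialDensity {j | j ∉ R} n = 1 - partialDensity R n := by
  have hsum : cnt R n + cnt {j | j ∉ R} n = n := by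
    have hU : R ∪ {j | j ∉ R} = Set.univ := by
      ext j; by_cases hj : j ∈ R <;> simp [hj]
    have hd : Disjoint R {j | j ∉ R} := by
      rw [Set.disjoint_left]; intro a ha ha'; exact ha' ha
    have hcu := cnt_union hd n
    rw [hU] at hcu
    have huniv : cnt Set.univ n = n := by simp [cnt]
    omega
  have hnR : (0:ℝ) < n := by exact_mod_cast hn
  rw [pd_eq, pd_eq]
  have : (cnt {j | j ∉ R} n : ℝ) = n - cnt R n := by
    have := congrArg (fun x : ℕ => (x : ℝ)) hsum
    push_cast at this
    linarith
  rw [this]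
  field_simp

lemma master (hmono : StrictMono h) (hrange : Set.range h = R) {s : ℝ}
    (hRd : HasDensity R s) (E : Set ℕ) :
    liminf (fun n => partialDensity (h '' E) n + partialDensity {j | j ∉ R} n) atTop
      = s * lowerDensity E + (1 - s) := by
  have hcomp : liminf (fun n => partialDensity E (cnt R n)) atTop = lowerDensity E :=
    liminf_comp_of_map _ (map_cntR hmono hrange)
  have hev : (fun n => partialDensity (h '' E) n + partialDensity {j | j ∉ R} n)
      =ᶠ[atTop] (fun n => partialDensity R n * partialDensity E (cnt R n)
        + (1 - partialDensity R n)) := by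
    filter_upwards [eventually_gt_atTop 0] with n hn
    rw [pd_image hmono hrange, pd_compl n hn]
  rw [liminf_congr hev,
    liminf_affine hRd (pd_nonneg R) (pd_le_one R)
      (fun n => pd_nonneg E (cnt R n)) (fun n => pd_le_one E (cnt R n)),
    hcomp]

end StrictMonoEnum

lemma pd_union_ge {U V S : Set ℕ} (hd : Disjoint U V) (hsub : U ∪ V ⊆ S) (n : ℕ) :
    partialDensity U n + partialDensity V n ≤ partialDensity S n := by
  rw [pd_eq, pd_eq, pd_eq, ← add_div]
  have h1 : cnt U n + cnt V n ≤ cnt S n := by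
    rw [← cnt_union hd]; exact cnt_mono_set hsub n
  gcongr
  exact_mod_cast h1

lemma pd_union_le' {U V S : Set ℕ} (hd : Disjoint U V) (hsub : S ⊆ U ∪ V) (n : ℕ) :
    partialDensity S n ≤ partialDensity U n + partialDensity V n := by
  rw [pd_eq, pd_eq, pd_eq, ← add_div]
  have h1 : cnt S n ≤ cnt U n + cnt V n := by
    rw [← cnt_union hd]; exact cnt_mono_set hsub n
  gcongr
  exact_mod_cast h1

end CoarseScaling

theorem coarse_spectrum_scaling (A : Set ℕ) (s : ℝ) (h : ℕ → ℕ) (R : Set ℕ)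
    (hs0 : 0 < s) (hs1 : s ≤ 1) (hR : IsComputableSet R) (hRd : HasDensity R s)
    (hmono : StrictMono h) (hcomp : Computable h) (hrange : Set.range h = R) :
    (∀ t : ℝ, 0 ≤ t → t ≤ 1 →
      (CoarselyComputableAt A t ↔ CoarselyComputableAt (h '' A) (s * t + (1 - s)))) ∧
    gammaBound (h '' A) = s * gammaBound A + (1 - s) := by
  have hiff : ∀ t : ℝ, 0 ≤ t → t ≤ 1 →
      (CoarselyComputableAt A t ↔ CoarselyComputableAt (h '' A) (s * t + (1 - s))) := by
    intro t ht0 ht1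
    constructor
    · rintro ⟨C, hCc, hCd⟩
      refine ⟨h '' C, CoarseScaling.isComputableSet_image hmono hcomp hCc, ?_⟩
      set E : Set ℕ := {n | n ∈ A ↔ n ∈ C} with hE
      have hdisj : Disjoint (h '' E) {j | j ∉ R} := by
        rw [Set.disjoint_left]
        rintro a ⟨k, _, rfl⟩ ha'
        exact ha' (hrange ▸ Set.mem_range_self k)
      have hsub : h '' E ∪ {j | j ∉ R} ⊆ {n | n ∈ h '' A ↔ n ∈ h '' C} := by
        rintro n (⟨k, hkE, rfl⟩ | hn)
        · have h1 : h k ∈ h '' A ↔ k ∈ A := hmono.injective.mem_set_image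
          have h2 : h k ∈ h '' C ↔ k ∈ C := hmono.injective.mem_set_image
          show h k ∈ h '' A ↔ h k ∈ h '' C
          rw [h1, h2]; exact hkE
        · have h1 : n ∉ h '' A := by
            rintro ⟨k, _, rfl⟩; exact hn (hrange ▸ Set.mem_range_self k)
          have h2 : n ∉ h '' C := by
            rintro ⟨k, _, rfl⟩; exact hn (hrange ▸ Set.mem_range_self k)
          exact iff_of_false h1 h2
      have hptw : ∀ᶠ n in atTop,
          partialDensity (h '' E) n + partialDensity {j | j ∉ R} n
            ≤ partialDensity {n | n ∈ h '' A ↔ n ∈ h '' C} n :=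
        Eventually.of_forall (fun n => CoarseScaling.pd_union_ge hdisj hsub n)
      have hlim : s * lowerDensity E + (1 - s)
          ≤ lowerDensity {n | n ∈ h '' A ↔ n ∈ h '' C} := by
        rw [← CoarseScaling.master hmono hrange hRd E]
        exact liminf_le_liminf hptw
          (isBoundedUnder_of ⟨0, fun n =>
            add_nonneg (CoarseScaling.pd_nonneg _ n) (CoarseScaling.pd_nonneg _ n)⟩)
          ((CoarseScaling.bddLe _).isCoboundedUnder_ge)
      have h3 : s * t + (1 - s) ≤ s * lowerDensity E + (1 - s) := by
        have := mul_le_mul_of_nonneg_left hCd hs0.le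
        linarith
      exact h3.trans hlim
    · rintro ⟨D, hDc, hDd⟩
      refine ⟨{k | h k ∈ D}, CoarseScaling.isComputableSet_preimage hcomp hDc, ?_⟩
      set E : Set ℕ := {k | k ∈ A ↔ k ∈ {k | h k ∈ D}} with hE
      have hdisj : Disjoint (h '' E) {j | j ∉ R} := by
        rw [Set.disjoint_left]
        rintro a ⟨k, _, rfl⟩ ha'
        exact ha' (hrange ▸ Set.mem_range_self k)
      have hsub : {n | n ∈ h '' A ↔ n ∈ D} ⊆ h '' E ∪ {j | j ∉ R} := by
        intro n hn
        by_cases hnR : n ∈ R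
        · left
          rw [← hrange] at hnR
          obtain ⟨k, rfl⟩ := hnR
          refine ⟨k, ?_, rfl⟩
          have h1 : h k ∈ h '' A ↔ k ∈ A := hmono.injective.mem_set_image
          show k ∈ A ↔ h k ∈ D
          rw [← h1]; exact hn
        · right; exact hnR
      have hptw : ∀ᶠ n in atTop,
          partialDensity {n | n ∈ h '' A ↔ n ∈ D} n
            ≤ partialDensity (h '' E) n + partialDensity {j | j ∉ R} n :=
        Eventually.of_forall (fun n => CoarseScaling.pd_union_le' hdisj hsub n)
      have hlim : lowerDensity {n | n ∈ h '' A ↔ n ∈ D}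
          ≤ s * lowerDensity E + (1 - s) := by
        rw [← CoarseScaling.master hmono hrange hRd E]
        exact liminf_le_liminf hptw
          (CoarseScaling.bddGe _)
          ((isBoundedUnder_of ⟨2, fun n => by
            have := CoarseScaling.pd_le_one (h '' E) n
            have := CoarseScaling.pd_le_one {j | j ∉ R} n
            linarith⟩ :
              IsBoundedUnder (· ≤ ·) atTop _).isCoboundedUnder_ge)
      have h2 : s * t + (1 - s) ≤ s * lowerDensity E + (1 - s) := le_trans hDd hlim
      have h3 : t ≤ lowerDensity E := by
        have hst : s * t ≤ s * lowerDensity E := by linarith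
        exact (mul_le_mul_iff_right₀ hs0).1 hst
      exact h3
  refine ⟨hiff, ?_⟩
  have bddA : BddAbove {r | CoarselyComputableAt A r} :=
    ⟨1, fun r hr => CoarseScaling.ccAt_le_one hr⟩
  have bddB : BddAbove {r | CoarselyComputableAt (h '' A) r} :=
    ⟨1, fun r hr => CoarseScaling.ccAt_le_one hr⟩
  have hAne : (0:ℝ) ∈ {r | CoarselyComputableAt A r} := CoarseScaling.ccAt_zero A
  have hgA0 : 0 ≤ gammaBound A := le_csSup bddA hAne
  have hgA1 : gammaBound A ≤ 1 :=
    Real.sSup_le (fun r hr => CoarseScaling.ccAt_le_one hr) zero_le_one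
  apply le_antisymm
  · apply Real.sSup_le
    · intro r hr
      rcases le_or_gt r (1 - s) with hc | hc
      · nlinarith
      · set t := (r - (1 - s)) / s with ht
        have ht0 : 0 ≤ t := by
          apply div_nonneg _ hs0.le
          linarith
        have hr1 : r ≤ 1 := CoarseScaling.ccAt_le_one hr
        have ht1 : t ≤ 1 := by
          rw [ht, div_le_one hs0]; linarith
        have hrt : s * t + (1 - s) = r := by
          rw [ht]; field_simp; ring
        have hA : CoarselyComputableAt A t := by
          apply (hiff t ht0 ht1).2
          rw [hrt]; exact hr
        have h4 : t ≤ gammaBound A := le_csSup bddA hA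
        nlinarith
    · nlinarith
  · apply le_of_forall_lt
    intro x hx
    have h1 : (x - (1 - s)) / s < gammaBound A := by
      rw [div_lt_iff₀ hs0]; linarith
    obtain ⟨tt, htA, hlt⟩ := exists_lt_of_lt_csSup ⟨0, hAne⟩ h1
    set t' := max tt 0 with ht'
    have ht'A : CoarselyComputableAt A t' := by
      rcases le_or_gt 0 tt with h0 | h0
      · rw [ht', max_eq_left h0]; exact htA
      · rw [ht', max_eq_right h0.le]; exact CoarseScaling.ccAt_zero A
    have ht'1 : t' ≤ 1 := max_le (CoarseScaling.ccAt_le_one htA) zero_le_one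
    have hB := (hiff t' (le_max_right tt 0) ht'1).1 ht'A
    have hmem : s * t' + (1 - s) ≤ gammaBound (h '' A) := le_csSup bddB hB
    have h5 : x < s * t' + (1 - s) := by
      have h6 : (x - (1 - s)) / s < t' := lt_of_lt_of_le hlt (le_max_left tt 0)
      rw [div_lt_iff₀ hs0] at h6
      linarith
    linarith
end
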